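/- arXiv:1512.06163 — 7 statements merged into one kernel-verified Lean document; each statement's English description precedes it below -/
import Mathlib

section
/- Let d ≥ 1, r > 0 and 1 ≤ q ≤ ∞. Let φ : ℝ^d → ℝ be twice continuously differentiable with ‖∂_β φ‖_q < ∞ for every multi-index β with |β| ≤ 2. Then ‖⟨φ⟩(·,r) − φ‖_q ≤ (d/2) · r² · max_{|β|=2} ‖∂_β φ‖_q. -/
open MeasureTheory Metric
open scoped ENNReal

/-- The average of `φ` over the ball of centre `x` and radius `r`. -/
noncomputable def ballAvg (d : ℕ) (φ : EuclideanSpace ℝ (Fin d) → ℝ)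
    (x : EuclideanSpace ℝ (Fin d)) (r : ℝ) : ℝ :=
  (volume (ball (0 : EuclideanSpace ℝ (Fin d)) r)).toReal⁻¹ * ∫ y in ball x r, φ y

/-- The `k`-th order partial derivative of `φ` in the coordinate directions
given by `idx : Fin k → Fin d` (the multi-index `β` has `|β| = k`). -/
noncomputable def pderiv' (d k : ℕ) (φ : EuclideanSpace ℝ (Fin d) → ℝ)
    (idx : Fin k → Fin d) (x : EuclideanSpace ℝ (Fin d)) : ℝ :=
  iteratedFDeriv ℝ k φ x (fun j => EuclideanSpace.single (idx j) (1 : ℝ))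

open Set Function

section Minkowski
variable {α β : Type*} [MeasurableSpace α] [MeasurableSpace β]
  {μ : Measure α} {ν : Measure β}

private lemma pointsup {p : ℝ} (hp : 1 ≤ p) (a : ℝ≥0∞) :
    ⨆ n : ℕ, (min a n) ^ p = a ^ p := by
  apply le_antisymm
  · exact iSup_le fun n => ENNReal.rpow_le_rpow (min_le_left _ _) (by linarith)
  · by_cases ha : a = ⊤
    · subst ha
      have h1 : ∀ n : ℕ, (n : ℝ≥0∞) ≤ (min ⊤ (n:ℝ≥0∞)) ^ p := by
        intro n
        rcases Nat.eq_zero_or_pos n with h | h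
        · simp [h]
        · have hn1 : (1:ℝ≥0∞) ≤ (n:ℝ≥0∞) := by exact_mod_cast h
          calc (n:ℝ≥0∞) = (min ⊤ (n:ℝ≥0∞)) ^ (1:ℝ) := by simp
          _ ≤ (min ⊤ (n:ℝ≥0∞)) ^ p := by
              apply ENNReal.rpow_le_rpow_of_exponent_le (by simpa using hn1) hp
      have : (⊤:ℝ≥0∞) ≤ ⨆ n : ℕ, (min ⊤ (n:ℝ≥0∞)) ^ p :=
        le_trans (le_of_eq ENNReal.iSup_natCast.symm) (iSup_mono h1)
      simpa [ENNReal.top_rpow_of_pos (by linarith : (0:ℝ) < p)] using this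
    · obtain ⟨n, hn⟩ := ENNReal.exists_nat_gt ha
      exact le_iSup_of_le n (by rw [min_eq_left hn.le])

private lemma minkowski_aux {p p' : ℝ} (hp : 1 < p) (hpq : p.HolderConjugate p')
    [SFinite μ] [SFinite ν] {f : α → β → ℝ≥0∞} (hf : Measurable (Function.uncurry f))
    {s : Set α} (hs : MeasurableSet s) (hμs : μ s ≠ ⊤) (m : ℕ) :
    ∫⁻ x in s, (min (∫⁻ y, f x y ∂ν) m) ^ p ∂μ ≤
      (∫⁻ y, (∫⁻ x, f x y ^ p ∂μ) ^ (1/p) ∂ν) ^ p := by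
  set G : α → ℝ≥0∞ := fun x => ∫⁻ y, f x y ∂ν with hG
  have hGmeas : Measurable G := hf.lintegral_prod_right
  set Gm : α → ℝ≥0∞ := fun x => min (G x) m with hGm
  have hGmmeas : Measurable Gm := hGmeas.min measurable_const
  set I : ℝ≥0∞ := ∫⁻ x in s, Gm x ^ p ∂μ with hI
  set T : ℝ≥0∞ := ∫⁻ y, (∫⁻ x, f x y ^ p ∂μ) ^ (1/p) ∂ν with hT
  have hIfin : I ≠ ⊤ := by
    have : I ≤ (m:ℝ≥0∞)^p * μ s := by
      rw [hI, ← setLIntegral_const s ((m:ℝ≥0∞)^p)]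
      exact lintegral_mono fun x => ENNReal.rpow_le_rpow (min_le_right _ _) (by linarith)
    exact (this.trans_lt (ENNReal.mul_lt_top (ENNReal.rpow_lt_top_of_nonneg (by linarith)
      (by simp)) hμs.lt_top)).ne
  rcases eq_or_ne I 0 with hI0 | hI0
  · rw [hI0]; exact zero_le
  -- key inequality
  have hGmne : ∀ x, Gm x ^ (p-1) ≠ ⊤ := by
    intro x
    exact (ENNReal.rpow_lt_top_of_nonneg (by linarith) ((min_le_right _ _).trans_lt (by simp)).ne).ne
  have key : I ≤ T * I ^ (1/p') := by
    have step1 : I ≤ ∫⁻ x in s, Gm x ^ (p-1) * G x ∂μ := by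
      rw [hI]
      apply lintegral_mono fun x => ?_
      calc Gm x ^ p = Gm x ^ ((p-1) + 1) := by norm_num
        _ = Gm x ^ (p-1) * Gm x ^ (1:ℝ) := ENNReal.rpow_add_of_nonneg _ _ (by linarith) zero_le_one
        _ ≤ Gm x ^ (p-1) * G x := by
            rw [ENNReal.rpow_one]; exact mul_le_mul_right (min_le_left _ _) _
    have step2 : ∫⁻ x in s, Gm x ^ (p-1) * G x ∂μ
        = ∫⁻ y, ∫⁻ x in s, Gm x ^ (p-1) * f x y ∂μ ∂ν := by
      rw [show (fun x => Gm x ^ (p-1) * G x) = fun x => ∫⁻ y, Gm x ^ (p-1) * f x y ∂ν from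
        funext fun x => (lintegral_const_mul' _ _ (hGmne x)).symm]
      exact lintegral_lintegral_swap (by
        apply AEMeasurable.mul
        · exact ((ENNReal.continuous_rpow_const.measurable.comp hGmmeas).comp measurable_fst).aemeasurable
        · exact hf.aemeasurable)
    have step3 : ∀ y, ∫⁻ x in s, Gm x ^ (p-1) * f x y ∂μ ≤
        (∫⁻ x, f x y ^ p ∂μ) ^ (1/p) * I ^ (1/p') := by
      intro y
      have hold := ENNReal.lintegral_mul_le_Lp_mul_Lq (μ.restrict s) hpq
        (f := fun x => f x y) (g := fun x => Gm x ^ (p-1))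
        ((hf.comp (measurable_id.prodMk measurable_const)).aemeasurable)
        ((ENNReal.continuous_rpow_const.measurable.comp hGmmeas).aemeasurable)
      have heq : (∫⁻ x in s, (Gm x ^ (p-1)) ^ p' ∂μ) ^ (1/p') = I ^ (1/p') := by
        congr 1
        rw [hI]
        apply lintegral_congr fun x => ?_
        rw [← ENNReal.rpow_mul, hpq.sub_one_mul_conj]
      calc ∫⁻ x in s, Gm x ^ (p-1) * f x y ∂μ
          = ∫⁻ x in s, (fun x => f x y) x * (fun x => Gm x ^ (p-1)) x ∂μ := by
            simp only [mul_comm]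
        _ ≤ (∫⁻ x in s, f x y ^ p ∂μ) ^ (1/p) * (∫⁻ x in s, (Gm x ^ (p-1)) ^ p' ∂μ) ^ (1/p') :=
            hold
        _ ≤ (∫⁻ x, f x y ^ p ∂μ) ^ (1/p) * I ^ (1/p') := by
            rw [heq]
            exact mul_le_mul_left (ENNReal.rpow_le_rpow
              (lintegral_mono' Measure.restrict_le_self le_rfl) (by positivity)) _
    calc I ≤ ∫⁻ y, (∫⁻ x, f x y ^ p ∂μ) ^ (1/p) * I ^ (1/p') ∂ν :=
          step1.trans (step2.trans_le (lintegral_mono step3))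
      _ = T * I ^ (1/p') := by
          have hmeasT : AEMeasurable (fun y => (∫⁻ x, f x y ^ p ∂μ) ^ (1/p)) ν := by
            apply Measurable.aemeasurable
            exact ENNReal.continuous_rpow_const.measurable.comp
              (Measurable.lintegral_prod_left (f := fun x y => f x y ^ p)
                (by exact ENNReal.continuous_rpow_const.measurable.comp hf))
          rw [hT, lintegral_mul_const'' _ hmeasT]
  -- conclude
  have hp'pos : (0:ℝ) < p' := hpq.symm.pos
  have hI1p' : I ^ (1/p') ≠ 0 := by
    simp only [ne_eq, ENNReal.rpow_eq_zero_iff, not_or]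
    constructor
    · rintro ⟨h, -⟩; exact hI0 h
    · rintro ⟨h, -⟩; exact hIfin h
  have hI1p'top : I ^ (1/p') ≠ ⊤ :=
    (ENNReal.rpow_lt_top_of_nonneg (by positivity) hIfin).ne
  have hsplit : I = I ^ (1/p) * I ^ (1/p') := by
    have h1 : 1/p + 1/p' = 1 := by rw [one_div, one_div, hpq.inv_add_inv_eq_one]
    rw [← ENNReal.rpow_add _ _ hI0 hIfin, h1, ENNReal.rpow_one]
  have : I ^ (1/p) ≤ T := by
    rw [← ENNReal.mul_le_mul_iff_left hI1p' hI1p'top, ← hsplit]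
    exact key
  calc I = (I ^ (1/p)) ^ p := by
        rw [← ENNReal.rpow_mul, one_div, inv_mul_cancel₀ (by positivity), ENNReal.rpow_one]
    _ ≤ T ^ p := ENNReal.rpow_le_rpow this (by linarith)

theorem lintegral_minkowski [SigmaFinite μ] [SFinite ν] {p : ℝ} (hp : 1 ≤ p)
    {f : α → β → ℝ≥0∞} (hf : Measurable (Function.uncurry f)) :
    ∫⁻ x, (∫⁻ y, f x y ∂ν) ^ p ∂μ ≤ (∫⁻ y, (∫⁻ x, f x y ^ p ∂μ) ^ (1/p) ∂ν) ^ p := by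
  rcases eq_or_lt_of_le hp with hp1 | hp1
  · simp only [← hp1, ENNReal.rpow_one, one_div, inv_one]
    exact le_of_eq (lintegral_lintegral_swap hf.aemeasurable)
  set G : α → ℝ≥0∞ := fun x => ∫⁻ y, f x y ∂ν with hG
  have hGmeas : Measurable G := hf.lintegral_prod_right
  set h : ℕ → α → ℝ≥0∞ := fun n x => (spanningSets μ n).indicator
    (fun x => (min (G x) n) ^ p) x with hh
  have hmono : Monotone h := by
    intro n m hnm x
    simp only [hh]
    by_cases hx : x ∈ spanningSets μ n
    · rw [indicator_of_mem hx, indicator_of_mem (monotone_spanningSets μ hnm hx)]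
      exact ENNReal.rpow_le_rpow (min_le_min le_rfl (by exact_mod_cast hnm)) (by linarith)
    · rw [indicator_of_notMem hx]; exact zero_le
  have hpt : ∀ x, (⨆ n, h n x) = G x ^ p := by
    intro x
    obtain ⟨N, hN⟩ : ∃ N, x ∈ spanningSets μ N := by
      have : x ∈ ⋃ n, spanningSets μ n := by rw [iUnion_spanningSets]; trivial
      exact mem_iUnion.mp this
    apply le_antisymm
    · apply iSup_le fun n => ?_
      simp only [hh]
      by_cases hx : x ∈ spanningSets μ n
      · rw [indicator_of_mem hx]
        exact ENNReal.rpow_le_rpow (min_le_left _ _) (by linarith)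
      · rw [indicator_of_notMem hx]; exact zero_le
    · rw [← pointsup hp (G x)]
      apply iSup_mono' fun n => ⟨max n N, ?_⟩
      simp only [hh]
      rw [indicator_of_mem (monotone_spanningSets μ (le_max_right n N) hN)]
      exact ENNReal.rpow_le_rpow (min_le_min le_rfl (by exact_mod_cast le_max_left n N))
        (by linarith)
  have hmeas_h : ∀ n, Measurable (h n) := fun n => Measurable.indicator
    (by exact ENNReal.continuous_rpow_const.measurable.comp (hGmeas.min measurable_const))
    (measurableSet_spanningSets μ n)
  have hcalc : ∫⁻ x, G x ^ p ∂μ = ⨆ n, ∫⁻ x in spanningSets μ n, (min (G x) n) ^ p ∂μ := by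
    calc ∫⁻ x, G x ^ p ∂μ = ∫⁻ x, ⨆ n, h n x ∂μ := lintegral_congr fun x => (hpt x).symm
      _ = ⨆ n, ∫⁻ x, h n x ∂μ := lintegral_iSup hmeas_h hmono
      _ = ⨆ n, ∫⁻ x in spanningSets μ n, (min (G x) n) ^ p ∂μ :=
          iSup_congr fun n => lintegral_indicator (measurableSet_spanningSets μ n) _
  rw [hcalc]
  apply iSup_le fun n => ?_
  exact minkowski_aux hp1 (Real.HolderConjugate.conjExponent hp1) hf
    (measurableSet_spanningSets μ n) (measure_spanningSets_lt_top μ n).ne n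

theorem minkowski_eLpNorm [SigmaFinite μ] [SFinite ν] {q : ℝ≥0∞} (hq : 1 ≤ q)
    {g : α → β → ℝ} (hg : Measurable (Function.uncurry g))
    {w : β → ℝ≥0∞} (hw : Measurable w)
    (hbound : ∀ᵐ y ∂ν, eLpNorm (fun x => g x y) q μ ≤ w y) :
    eLpNorm (fun x => ∫ y, g x y ∂ν) q μ ≤ ∫⁻ y, w y ∂ν := by
  have hq0 : q ≠ 0 := (zero_lt_one.trans_le hq).ne'
  have hgn : Measurable (fun z : α × β => (‖g z.1 z.2‖₊ : ℝ≥0∞)) := hg.enorm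
  by_cases hqt : q = ⊤
  · subst hqt
    rw [eLpNorm_exponent_top]
    have hsec : ∀ᵐ y ∂ν, μ {x | w y < (‖g x y‖₊ : ℝ≥0∞)} = 0 := by
      filter_upwards [hbound] with y hy
      rw [eLpNorm_exponent_top] at hy
      have h1 : ∀ᵐ x ∂μ, (‖g x y‖₊ : ℝ≥0∞) ≤ w y := by
        filter_upwards [ae_le_eLpNormEssSup (f := fun x => g x y) (μ := μ)] with x hx
        exact hx.trans hy
      have := ae_iff.mp h1
      simpa [not_le] using this
    have hS : MeasurableSet {z : β × α | w z.1 < (‖g z.2 z.1‖₊ : ℝ≥0∞)} :=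
      measurableSet_lt (hw.comp measurable_fst)
        (hgn.comp (measurable_snd.prodMk measurable_fst))
    have hprod : (ν.prod μ) {z : β × α | w z.1 < (‖g z.2 z.1‖₊ : ℝ≥0∞)} = 0 := by
      rw [Measure.measure_prod_null hS]
      filter_upwards [hsec] with y hy
      simpa using hy
    have hswap : (μ.prod ν) {z : α × β | w z.2 < (‖g z.1 z.2‖₊ : ℝ≥0∞)} = 0 := by
      have hps := Measure.prod_swap (μ := μ) (ν := ν)
      rw [← hps, Measure.map_apply measurable_swap hS] at hprod
      exact hprod
    have hae : ∀ᵐ x ∂μ, ∀ᵐ y ∂ν, (‖g x y‖₊ : ℝ≥0∞) ≤ w y := by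
      exact Measure.ae_ae_of_ae_prod (p := fun z => (‖g z.1 z.2‖₊ : ℝ≥0∞) ≤ w z.2)
        (by rw [ae_iff]; simpa [not_le] using hswap)
    apply essSup_le_of_ae_le (hfbdd := by isBoundedDefault)
    filter_upwards [hae] with x hx
    calc (‖∫ y, g x y ∂ν‖₊ : ℝ≥0∞) ≤ ∫⁻ y, ‖g x y‖₊ ∂ν :=
        enorm_integral_le_lintegral_enorm _
      _ ≤ ∫⁻ y, w y ∂ν := lintegral_mono_ae hx
  · set p := q.toReal with hp
    have hppos : 0 < p := ENNReal.toReal_pos hq0 hqt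
    have hp1 : 1 ≤ p := by
      rw [hp, ← ENNReal.toReal_one]
      exact ENNReal.toReal_mono hqt hq
    rw [eLpNorm_eq_lintegral_rpow_enorm_toReal hq0 hqt]
    have main : ∫⁻ x, (‖∫ y, g x y ∂ν‖₊ : ℝ≥0∞) ^ p ∂μ ≤ (∫⁻ y, w y ∂ν) ^ p := by
      calc ∫⁻ x, (‖∫ y, g x y ∂ν‖₊ : ℝ≥0∞) ^ p ∂μ
          ≤ ∫⁻ x, (∫⁻ y, ‖g x y‖₊ ∂ν) ^ p ∂μ := lintegral_mono fun x =>
            ENNReal.rpow_le_rpow (enorm_integral_le_lintegral_enorm _) hppos.le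
        _ ≤ (∫⁻ y, (∫⁻ x, (‖g x y‖₊ : ℝ≥0∞) ^ p ∂μ) ^ (1/p) ∂ν) ^ p :=
            lintegral_minkowski hp1 (f := fun x y => (‖g x y‖₊ : ℝ≥0∞)) (by exact hgn)
        _ ≤ (∫⁻ y, w y ∂ν) ^ p := by
            apply ENNReal.rpow_le_rpow _ hppos.le
            apply lintegral_mono_ae
            filter_upwards [hbound] with y hy
            rw [eLpNorm_eq_lintegral_rpow_enorm_toReal hq0 hqt] at hy
            exact hy
    calc (∫⁻ x, (‖∫ y, g x y ∂ν‖₊:ℝ≥0∞) ^ p ∂μ) ^ (1/p) ≤ ((∫⁻ y, w y ∂ν) ^ p) ^ (1/p) :=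
        ENNReal.rpow_le_rpow main (by positivity)
      _ = ∫⁻ y, w y ∂ν := by
        rw [← ENNReal.rpow_mul, mul_one_div_cancel hppos.ne', ENNReal.rpow_one]

end Minkowski

section App
variable {d : ℕ}

local notation "E" => EuclideanSpace ℝ (Fin d)

variable {φ : EuclideanSpace ℝ (Fin d) → ℝ}

lemma hrep (v : E) : ∑ i : Fin d, v i • EuclideanSpace.single i (1:ℝ) = v := by
  have h := (EuclideanSpace.basisFun (Fin d) ℝ).sum_repr v
  simpa [EuclideanSpace.basisFun_apply, EuclideanSpace.basisFun_repr] using h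

lemma bilin_expand (B : E →L[ℝ] E →L[ℝ] ℝ) (y z : E) :
    B y z = ∑ i : Fin d, ∑ j : Fin d,
      (y i * z j) * B (EuclideanSpace.single i 1) (EuclideanSpace.single j 1) := by
  conv_lhs => rw [← hrep y, ← hrep z]
  simp only [map_sum, ContinuousLinearMap.sum_apply]
  rw [Finset.sum_comm]
  refine Finset.sum_congr rfl fun i _ => Finset.sum_congr rfl fun j _ => ?_
  rw [_root_.map_smul, _root_.map_smul, ContinuousLinearMap.smul_apply, smul_eq_mul,
    smul_eq_mul]
  ring

lemma pderiv_eq (φ : E → ℝ) (i j : Fin d) (x : E) :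
    pderiv' d 2 φ ![i,j] x =
      fderiv ℝ (fderiv ℝ φ) x (EuclideanSpace.single i 1) (EuclideanSpace.single j 1) := by
  rw [pderiv', iteratedFDeriv_two_apply]
  simp

lemma cauchy_schwarz_aux (y : E) : (∑ i : Fin d, |y i|) ^ 2 ≤ (d : ℝ) * ‖y‖ ^ 2 := by
  have h := Finset.sum_mul_sq_le_sq_mul_sq Finset.univ (fun _ : Fin d => (1:ℝ))
    (fun i => |y i|)
  have hn : ‖y‖ ^ 2 = ∑ i : Fin d, |y i| ^ 2 := by
    rw [EuclideanSpace.norm_eq, Real.sq_sqrt (by positivity)]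
    simp [Real.norm_eq_abs]
  rw [hn]
  simpa using h

variable {φ : EuclideanSpace ℝ (Fin d) → ℝ}

lemma second_deriv_eLpNorm_bound (hφ : ContDiff ℝ 2 φ) (q : ℝ≥0∞) (hq : 1 ≤ q) (y : E) :
    eLpNorm (fun x : E => fderiv ℝ (fderiv ℝ φ) x y y) q volume ≤
      ENNReal.ofReal ((d:ℝ) * ‖y‖^2) *
        ⨆ idx : Fin 2 → Fin d, eLpNorm (pderiv' d 2 φ idx) q volume := by
  set S := ⨆ idx : Fin 2 → Fin d, eLpNorm (pderiv' d 2 φ idx) q volume with hS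
  have hBcont : Continuous (fderiv ℝ (fderiv ℝ φ)) :=
    (hφ.fderiv_right (m := 1) (by norm_num)).continuous_fderiv one_ne_zero
  have hijcont : ∀ i j : Fin d, Continuous (pderiv' d 2 φ ![i,j]) := by
    intro i j
    have : Continuous fun x : E =>
        fderiv ℝ (fderiv ℝ φ) x (EuclideanSpace.single i 1) (EuclideanSpace.single j 1) :=
      (hBcont.clm_apply continuous_const).clm_apply continuous_const
    convert this using 1
    funext x
    rw [pderiv_eq]
  have hfun : (fun x : E => fderiv ℝ (fderiv ℝ φ) x y y)
      = ∑ i : Fin d, ∑ j : Fin d, (y i * y j) • pderiv' d 2 φ ![i,j] := by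
    funext x
    rw [bilin_expand (fderiv ℝ (fderiv ℝ φ) x) y y, Finset.sum_apply]
    refine Finset.sum_congr rfl fun i _ => ?_
    rw [Finset.sum_apply]
    refine Finset.sum_congr rfl fun j _ => ?_
    rw [Pi.smul_apply, smul_eq_mul, pderiv_eq]
  calc eLpNorm (fun x : E => fderiv ℝ (fderiv ℝ φ) x y y) q volume
      = eLpNorm (∑ i : Fin d, ∑ j : Fin d, (y i * y j) • pderiv' d 2 φ ![i,j]) q volume := by
        rw [hfun]
    _ ≤ ∑ i : Fin d, eLpNorm (∑ j : Fin d, (y i * y j) • pderiv' d 2 φ ![i,j]) q volume := by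
        apply eLpNorm_sum_le _ hq
        intro i _
        apply Finset.aestronglyMeasurable_sum
        intro j _
        show AEStronglyMeasurable (fun x => (y i * y j) • pderiv' d 2 φ ![i,j] x) volume
        exact (hijcont i j).aestronglyMeasurable.const_smul (y i * y j)
    _ ≤ ∑ i : Fin d, ∑ j : Fin d, eLpNorm ((y i * y j) • pderiv' d 2 φ ![i,j]) q volume := by
        refine Finset.sum_le_sum fun i _ => ?_
        apply eLpNorm_sum_le _ hq
        intro j _
        show AEStronglyMeasurable (fun x => (y i * y j) • pderiv' d 2 φ ![i,j] x) volume
        exact (hijcont i j).aestronglyMeasurable.const_smul (y i * y j)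
    _ ≤ ∑ i : Fin d, ∑ j : Fin d, ENNReal.ofReal (|y i| * |y j|) * S := by
        refine Finset.sum_le_sum fun i _ => Finset.sum_le_sum fun j _ => ?_
        rw [eLpNorm_const_smul]
        have h1 : ‖y i * y j‖ₑ = ENNReal.ofReal (|y i| * |y j|) := by
          rw [← abs_mul]
          rw [← Real.enorm_eq_ofReal (abs_nonneg _)]
          simp [Real.nnnorm_abs]
        rw [h1]
        exact mul_le_mul_right (le_iSup (fun idx => eLpNorm (pderiv' d 2 φ idx) q volume)
          ![i,j]) _
    _ = ENNReal.ofReal ((∑ i : Fin d, |y i|)^2) * S := by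
        rw [sq, Finset.sum_mul_sum]
        rw [ENNReal.ofReal_sum_of_nonneg (fun i _ => by positivity), Finset.sum_mul]
        refine Finset.sum_congr rfl fun i _ => ?_
        rw [ENNReal.ofReal_sum_of_nonneg (fun j _ => by positivity), Finset.sum_mul]
    _ ≤ ENNReal.ofReal ((d:ℝ) * ‖y‖^2) * S :=
        mul_le_mul_left (ENNReal.ofReal_le_ofReal (cauchy_schwarz_aux y)) _

lemma taylor_repr (hφ : ContDiff ℝ 2 φ) (x y : E) :
    φ (x + y) - φ x - fderiv ℝ φ x y
      = ∫ t in Set.Ioc (0:ℝ) 1, (1 - t) * fderiv ℝ (fderiv ℝ φ) (x + t • y) y y := by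
  have hφ1 : ContDiff ℝ 1 (fderiv ℝ φ) := hφ.fderiv_right (by norm_num)
  have hdφ : Differentiable ℝ φ := hφ.differentiable (by norm_num)
  have hdφ' : Differentiable ℝ (fderiv ℝ φ) := hφ1.differentiable one_ne_zero
  have hcder : ∀ t : ℝ, HasDerivAt (fun s : ℝ => x + s • y) y t := fun t => by
    simpa using ((hasDerivAt_id t).smul_const y).const_add x
  have hder : ∀ t : ℝ, HasDerivAt
      (fun s => φ (x + s • y) + (1 - s) * (fderiv ℝ φ (x + s • y)) y)
      ((1 - t) * fderiv ℝ (fderiv ℝ φ) (x + t • y) y y) t := by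
    intro t
    have h1 : HasDerivAt (fun s : ℝ => φ (x + s • y)) ((fderiv ℝ φ (x + t • y)) y) t :=
      (hdφ (x + t • y)).hasFDerivAt.comp_hasDerivAt t (hcder t)
    have h2 : HasDerivAt (fun s : ℝ => fderiv ℝ φ (x + s • y))
        (fderiv ℝ (fderiv ℝ φ) (x + t • y) y) t :=
      (hdφ' (x + t • y)).hasFDerivAt.comp_hasDerivAt t (hcder t)
    have h3 : HasDerivAt (fun s : ℝ => (fderiv ℝ φ (x + s • y)) y)
        (fderiv ℝ (fderiv ℝ φ) (x + t • y) y y) t := by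
      have := h2.clm_apply (hasDerivAt_const t y)
      simpa using this
    have h4 : HasDerivAt (fun s : ℝ => (1 : ℝ) - s) (-1) t := by
      simpa using (hasDerivAt_id t).const_sub (1:ℝ)
    have h5 := h4.mul h3
    have h6 := h1.add h5
    exact h6.congr_deriv (by ring)
  have hBcont : Continuous (fderiv ℝ (fderiv ℝ φ)) := hφ1.continuous_fderiv one_ne_zero
  have hccont : Continuous (fun t : ℝ => x + t • y) :=
    continuous_const.add (continuous_id.smul continuous_const)
  have hcont : Continuous fun t : ℝ => (1 - t) * fderiv ℝ (fderiv ℝ φ) (x + t • y) y y :=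
    (continuous_const.sub continuous_id).mul
      (((hBcont.comp hccont).clm_apply continuous_const).clm_apply continuous_const)
  have hint := intervalIntegral.integral_eq_sub_of_hasDerivAt
    (f := fun s => φ (x + s • y) + (1 - s) * (fderiv ℝ φ (x + s • y)) y)
    (f' := fun t => (1 - t) * fderiv ℝ (fderiv ℝ φ) (x + t • y) y y)
    (fun t _ => hder t) (hcont.intervalIntegrable 0 1)
  rw [intervalIntegral.integral_of_le zero_le_one] at hint
  rw [hint]
  simp
  ring

lemma integral_ball_symm (r : ℝ) : (∫ y in ball (0:E) r, y) = (0:E) := by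
  have hind : ∀ z : E, (ball (0:E) r).indicator (fun w : E => w) (-z)
      = - (ball (0:E) r).indicator (fun w : E => w) z := by
    intro z
    by_cases h : z ∈ ball (0:E) r
    · have h' : -z ∈ ball (0:E) r := by
        rw [mem_ball_zero_iff, norm_neg, ← mem_ball_zero_iff]; exact h
      rw [Set.indicator_of_mem h', Set.indicator_of_mem h]
    · have h' : -z ∉ ball (0:E) r := by
        intro hc
        apply h
        rw [mem_ball_zero_iff, ← norm_neg, ← mem_ball_zero_iff]
        exact hc
      rw [Set.indicator_of_notMem h', Set.indicator_of_notMem h, neg_zero]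
  have h3 := integral_neg_eq_self ((ball (0:E) r).indicator (fun w : E => w)) volume
  have h4 : ∫ z : E, (ball (0:E) r).indicator (fun w : E => w) (-z)
      = - ∫ z : E, (ball (0:E) r).indicator (fun w : E => w) z := by
    simp_rw [hind]
    exact integral_neg _
  have h5 := (h4.symm.trans h3 :
    (- ∫ z : E, (ball (0:E) r).indicator (fun w : E => w) z)
      = ∫ z : E, (ball (0:E) r).indicator (fun w : E => w) z)
  have h6 : (∫ z : E, (ball (0:E) r).indicator (fun w : E => w) z) = 0 := by
    have h7 : (2:ℝ) • (∫ z : E, (ball (0:E) r).indicator (fun w : E => w) z) = 0 := by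
      rw [two_smul]
      nth_rewrite 1 [← h5]
      simp
    rcases smul_eq_zero.mp h7 with h | h
    · norm_num at h
    · exact h
  rw [← integral_indicator measurableSet_ball]
  exact h6

lemma cont_integrableOn_ball {F : Type*} [NormedAddCommGroup F] [NormedSpace ℝ F]
    {f : E → F} (hf : Continuous f) (c : E) (r : ℝ) :
    IntegrableOn f (ball c r) volume :=
  (hf.locallyIntegrable.integrableOn_isCompact (isCompact_closedBall c r)).mono_set
    ball_subset_closedBall

lemma ball_translate (ψ : E → ℝ) (hψ : Continuous ψ) (x : E) (r : ℝ) :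
    ∫ y in ball (0:E) r, ψ (x + y) = ∫ y in ball x r, ψ y := by
  have key : ∀ z : E, (Set.indicator (ball x r) ψ) (x + z)
      = (Set.indicator (ball (0:E) r) (fun y => ψ (x+y))) z := by
    intro z
    have hmem : x + z ∈ ball x r ↔ z ∈ ball (0:E) r := by
      simp [mem_ball, dist_eq_norm]
    by_cases h : z ∈ ball (0:E) r
    · rw [Set.indicator_of_mem (hmem.mpr h), Set.indicator_of_mem h]
    · rw [Set.indicator_of_notMem (fun hc => h (hmem.mp hc)), Set.indicator_of_notMem h]
  calc ∫ y in ball (0:E) r, ψ (x + y)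
      = ∫ z : E, (Set.indicator (ball (0:E) r) (fun y => ψ (x+y))) z :=
        (integral_indicator measurableSet_ball).symm
    _ = ∫ z : E, (Set.indicator (ball x r) ψ) (x + z) := by
        refine integral_congr_ae (Filter.Eventually.of_forall fun z => ?_)
        exact (key z).symm
    _ = ∫ z : E, (Set.indicator (ball x r) ψ) z := integral_add_left_eq_self _ x
    _ = ∫ y in ball x r, ψ y := integral_indicator measurableSet_ball

lemma repr_lemma (hφ : ContDiff ℝ 2 φ) {r : ℝ} (hr : 0 < r) (x : E) :
    ballAvg d φ x r - φ x = (volume (ball (0:E) r)).toReal⁻¹ *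
      ∫ y in ball (0:E) r, (φ (x + y) - φ x - fderiv ℝ φ x y) := by
  have hVpos : 0 < (volume (ball (0:E) r)).toReal :=
    ENNReal.toReal_pos (measure_ball_pos volume 0 hr).ne' measure_ball_lt_top.ne
  have hInt1 : IntegrableOn (fun y : E => φ (x + y)) (ball (0:E) r) volume :=
    cont_integrableOn_ball (hφ.continuous.comp (continuous_const.add continuous_id)) _ _
  have hInt2 : IntegrableOn (fun _ : E => φ x) (ball (0:E) r) volume :=
    integrableOn_const measure_ball_lt_top.ne
  have hInt3 : IntegrableOn (fun y : E => (fderiv ℝ φ x) y) (ball (0:E) r) volume :=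
    cont_integrableOn_ball (fderiv ℝ φ x).continuous _ _
  have hIntId : IntegrableOn (fun y : E => y) (ball (0:E) r) volume :=
    cont_integrableOn_ball continuous_id _ _
  have hlin : ∫ y in ball (0:E) r, (fderiv ℝ φ x) y = 0 := by
    rw [ContinuousLinearMap.integral_comp_comm _ hIntId, integral_ball_symm r, map_zero]
  have hsplit : ∫ y in ball (0:E) r, (φ (x + y) - φ x - (fderiv ℝ φ x) y)
      = (∫ y in ball (0:E) r, φ (x + y)) - (volume (ball (0:E) r)).toReal * φ x := by
    rw [integral_sub (f := fun y : E => φ (x + y) - φ x)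
      (g := fun y : E => (fderiv ℝ φ x) y) (hInt1.sub hInt2) hInt3,
      integral_sub hInt1 hInt2, hlin, setIntegral_const, sub_zero, smul_eq_mul]
    rfl
  rw [ballAvg, hsplit, ball_translate φ hφ.continuous x r, mul_sub]
  congr 1
  rw [← mul_assoc, inv_mul_cancel₀ hVpos.ne', one_mul]

lemma translated_bound (hφ : ContDiff ℝ 2 φ) (q : ℝ≥0∞) (hq : 1 ≤ q) (y : E) {t : ℝ}
    (ht : t ∈ Set.Ioc (0:ℝ) 1) :
    eLpNorm (fun x : E => (1 - t) * fderiv ℝ (fderiv ℝ φ) (x + t • y) y y) q volume ≤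
      ENNReal.ofReal (1 - t) * (ENNReal.ofReal ((d:ℝ) * ‖y‖^2) *
        ⨆ idx : Fin 2 → Fin d, eLpNorm (pderiv' d 2 φ idx) q volume) := by
  have hBcont : Continuous (fderiv ℝ (fderiv ℝ φ)) :=
    (hφ.fderiv_right (m := 1) (by norm_num)).continuous_fderiv one_ne_zero
  have hGcont : Continuous (fun x : E => fderiv ℝ (fderiv ℝ φ) x y y) :=
    (hBcont.clm_apply continuous_const).clm_apply continuous_const
  have hcomp : eLpNorm ((fun x : E => fderiv ℝ (fderiv ℝ φ) x y y) ∘ (fun x => x + t • y)) q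
      volume = eLpNorm (fun x : E => fderiv ℝ (fderiv ℝ φ) x y y) q volume :=
    eLpNorm_comp_measurePreserving hGcont.aestronglyMeasurable
      (measurePreserving_add_right volume (t • y))
  have heq : (fun x : E => (1 - t) * fderiv ℝ (fderiv ℝ φ) (x + t • y) y y)
      = (1 - t) • ((fun x : E => fderiv ℝ (fderiv ℝ φ) x y y) ∘ (fun x => x + t • y)) := rfl
  rw [heq, eLpNorm_const_smul, hcomp, Real.enorm_eq_ofReal (by linarith [ht.2])]
  exact mul_le_mul_right (second_deriv_eLpNorm_bound hφ q hq y) _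

lemma per_y_bound (hφ : ContDiff ℝ 2 φ) (q : ℝ≥0∞) (hq : 1 ≤ q) (y : E) :
    eLpNorm (fun x : E => φ (x + y) - φ x - fderiv ℝ φ x y) q volume ≤
      ENNReal.ofReal ((d:ℝ)/2 * ‖y‖^2) *
        ⨆ idx : Fin 2 → Fin d, eLpNorm (pderiv' d 2 φ idx) q volume := by
  set S := ⨆ idx : Fin 2 → Fin d, eLpNorm (pderiv' d 2 φ idx) q volume with hS
  have htay : (fun x : E => φ (x + y) - φ x - fderiv ℝ φ x y)
      = fun x => ∫ t in Set.Ioc (0:ℝ) 1, (1-t) * fderiv ℝ (fderiv ℝ φ) (x + t • y) y y :=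
    funext fun x => taylor_repr hφ x y
  rw [htay]
  have hBcont : Continuous (fderiv ℝ (fderiv ℝ φ)) :=
    (hφ.fderiv_right (m := 1) (by norm_num)).continuous_fderiv one_ne_zero
  have hg2 : Measurable (Function.uncurry fun (x : E) (t : ℝ) =>
      (1-t) * fderiv ℝ (fderiv ℝ φ) (x + t • y) y y) := by
    apply Continuous.measurable
    show Continuous fun z : E × ℝ => (1 - z.2) * fderiv ℝ (fderiv ℝ φ) (z.1 + z.2 • y) y y
    exact (continuous_const.sub continuous_snd).mul
      (((hBcont.comp (continuous_fst.add (continuous_snd.smul continuous_const))).clm_apply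
        continuous_const).clm_apply continuous_const)
  have hw2 : Measurable (fun t : ℝ =>
      ENNReal.ofReal (1-t) * (ENNReal.ofReal ((d:ℝ)*‖y‖^2) * S)) :=
    ((ENNReal.continuous_ofReal.comp (continuous_const.sub continuous_id)).measurable).mul_const _
  have hb2 : ∀ᵐ t ∂(volume.restrict (Set.Ioc (0:ℝ) 1)),
      eLpNorm (fun x : E => (1-t) * fderiv ℝ (fderiv ℝ φ) (x + t • y) y y) q volume ≤
        ENNReal.ofReal (1-t) * (ENNReal.ofReal ((d:ℝ)*‖y‖^2) * S) := by
    filter_upwards [ae_restrict_mem measurableSet_Ioc] with t ht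
    exact translated_bound hφ q hq y ht
  refine (minkowski_eLpNorm hq hg2 hw2 hb2).trans ?_
  have hC : ∫⁻ t in Set.Ioc (0:ℝ) 1, ENNReal.ofReal (1-t) ∂volume
      = ENNReal.ofReal (1/2) := by
    rw [← ofReal_integral_eq_lintegral_ofReal]
    · congr 1
      rw [← intervalIntegral.integral_of_le zero_le_one]
      rw [intervalIntegral.integral_sub intervalIntegrable_const
        intervalIntegral.intervalIntegrable_id, intervalIntegral.integral_const,
        integral_id]
      norm_num
    · exact ((continuous_const.sub continuous_id).locallyIntegrable.integrableOn_isCompact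
        isCompact_Icc).mono_set Set.Ioc_subset_Icc_self
    · filter_upwards [ae_restrict_mem measurableSet_Ioc] with t ht
      simp only [Pi.zero_apply]
      linarith [ht.2]
  have hae : AEMeasurable (fun t : ℝ => ENNReal.ofReal (1 - t))
      (volume.restrict (Set.Ioc (0:ℝ) 1)) := by
    apply Measurable.aemeasurable
    exact ENNReal.continuous_ofReal.measurable.comp (measurable_const.sub measurable_id)
  rw [lintegral_mul_const'' _ hae, hC]
  apply le_of_eq
  rw [← mul_assoc, ← ENNReal.ofReal_mul (by norm_num)]
  congr 2
  ring

end App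

theorem ball_average_approx (d : ℕ) (hd : 1 ≤ d) (r : ℝ) (hr : 0 < r)
    (q : ℝ≥0∞) (hq : 1 ≤ q)
    (φ : EuclideanSpace ℝ (Fin d) → ℝ) (hφ : ContDiff ℝ 2 φ)
    (hfin : ∀ k : ℕ, k ≤ 2 → ∀ idx : Fin k → Fin d,
      eLpNorm (pderiv' d k φ idx) q volume < ⊤) :
    eLpNorm (fun x => ballAvg d φ x r - φ x) q volume ≤
      ENNReal.ofReal ((d : ℝ) / 2 * r ^ 2) *
        ⨆ idx : Fin 2 → Fin d, eLpNorm (pderiv' d 2 φ idx) q volume := by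
  set S := ⨆ idx : Fin 2 → Fin d, eLpNorm (pderiv' d 2 φ idx) q volume with hS
  have hvol_pos : volume (ball (0 : EuclideanSpace ℝ (Fin d)) r) ≠ 0 := (measure_ball_pos volume 0 hr).ne'
  have hvol_top : volume (ball (0 : EuclideanSpace ℝ (Fin d)) r) ≠ ⊤ := measure_ball_lt_top.ne
  have h1 : (fun x : EuclideanSpace ℝ (Fin d) => ballAvg d φ x r - φ x)
      = ((volume (ball (0 : EuclideanSpace ℝ (Fin d)) r)).toReal⁻¹ : ℝ) •
        (fun x : EuclideanSpace ℝ (Fin d) => ∫ y in ball (0 : EuclideanSpace ℝ (Fin d)) r, (φ (x + y) - φ x - fderiv ℝ φ x y)) := by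
    funext x
    rw [Pi.smul_apply, smul_eq_mul]
    exact repr_lemma hφ hr x
  rw [h1, eLpNorm_const_smul]
  have hγ : Measurable (Function.uncurry
      fun (x y : EuclideanSpace ℝ (Fin d)) => φ (x + y) - φ x - fderiv ℝ φ x y) := by
    apply Continuous.measurable
    show Continuous fun z : EuclideanSpace ℝ (Fin d) × EuclideanSpace ℝ (Fin d) => φ (z.1 + z.2) - φ z.1 - fderiv ℝ φ z.1 z.2
    exact ((hφ.continuous.comp (continuous_fst.add continuous_snd)).sub
      (hφ.continuous.comp continuous_fst)).sub
      (((hφ.continuous_fderiv (by norm_num)).comp continuous_fst).clm_apply continuous_snd)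
  have hw : Measurable (fun y : EuclideanSpace ℝ (Fin d) => ENNReal.ofReal ((d:ℝ)/2 * ‖y‖^2) * S) :=
    ((ENNReal.continuous_ofReal.comp
      (continuous_const.mul (continuous_norm.pow 2))).measurable).mul_const _
  have hb : ∀ᵐ y ∂(volume.restrict (ball (0 : EuclideanSpace ℝ (Fin d)) r)),
      eLpNorm (fun x : EuclideanSpace ℝ (Fin d) => φ (x + y) - φ x - fderiv ℝ φ x y) q volume ≤
        ENNReal.ofReal ((d:ℝ)/2 * ‖y‖^2) * S :=
    Filter.Eventually.of_forall fun y => per_y_bound hφ q hq y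
  have hmink := minkowski_eLpNorm hq hγ hw hb
  refine le_trans (mul_le_mul_right hmink _) ?_
  have hlint : ∫⁻ y in ball (0 : EuclideanSpace ℝ (Fin d)) r, ENNReal.ofReal ((d:ℝ)/2 * ‖y‖^2) * S ∂volume
      ≤ (ENNReal.ofReal ((d:ℝ)/2 * r^2) * S) * volume (ball (0 : EuclideanSpace ℝ (Fin d)) r) := by
    rw [← setLIntegral_const (ball (0 : EuclideanSpace ℝ (Fin d)) r) (ENNReal.ofReal ((d:ℝ)/2 * r^2) * S)]
    apply lintegral_mono_ae
    filter_upwards [ae_restrict_mem measurableSet_ball] with y hy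
    have hyr : ‖y‖ < r := mem_ball_zero_iff.mp hy
    have hsq : ‖y‖^2 ≤ r^2 := by nlinarith [norm_nonneg y]
    exact mul_le_mul_left (ENNReal.ofReal_le_ofReal
      (mul_le_mul_of_nonneg_left hsq (by positivity))) _
  refine le_trans (mul_le_mul_right hlint _) ?_
  have hnorm : ‖((volume (ball (0 : EuclideanSpace ℝ (Fin d)) r)).toReal⁻¹ : ℝ)‖ₑ
      = (volume (ball (0 : EuclideanSpace ℝ (Fin d)) r))⁻¹ := by
    rw [Real.enorm_eq_ofReal (inv_nonneg.mpr ENNReal.toReal_nonneg),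
      ENNReal.ofReal_inv_of_pos (ENNReal.toReal_pos hvol_pos hvol_top),
      ENNReal.ofReal_toReal hvol_top]
  rw [hnorm]
  apply le_of_eq
  calc (volume (ball (0 : EuclideanSpace ℝ (Fin d)) r))⁻¹ *
        ((ENNReal.ofReal ((d:ℝ)/2 * r^2) * S) * volume (ball (0 : EuclideanSpace ℝ (Fin d)) r))
      = ((volume (ball (0 : EuclideanSpace ℝ (Fin d)) r))⁻¹ * volume (ball (0 : EuclideanSpace ℝ (Fin d)) r)) *
        (ENNReal.ofReal ((d:ℝ)/2 * r^2) * S) := by ring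
    _ = ENNReal.ofReal ((d:ℝ)/2 * r^2) * S := by
        rw [ENNReal.inv_mul_cancel hvol_pos hvol_top, one_mul]
end

section
/- Let d ≥ 1, r > 0 and x ∈ ℝ^d. Then ∫_{ℝ^d} ∫_{ℝ^d} |y − x|² · 1_{|x−z| < r} · 1_{|y−z| < r} dz dy = (2d/(d+2)) · r² · V_r². -/
open MeasureTheory Metric

lemma ball_translate_s2 {d : ℕ} (f : EuclideanSpace ℝ (Fin d) → ℝ)
    (c : EuclideanSpace ℝ (Fin d)) (r : ℝ) :
    ∫ u in ball c r, f u = ∫ v in ball (0 : EuclideanSpace ℝ (Fin d)) r, f (v + c) := by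
  rw [← integral_indicator measurableSet_ball, ← integral_indicator measurableSet_ball,
    ← integral_add_right_eq_self ((ball c r).indicator f) c]
  congr 1
  funext v
  by_cases h : v ∈ ball (0 : EuclideanSpace ℝ (Fin d)) r
  · have h' : v + c ∈ ball c r := by
      simpa [mem_ball_iff_norm] using (mem_ball_zero_iff.1 h)
    simp [Set.indicator_of_mem h', Set.indicator_of_mem h]
  · have h' : v + c ∉ ball c r := by
      simp only [mem_ball_iff_norm, add_sub_cancel_right]
      simpa [mem_ball_zero_iff] using h
    simp [Set.indicator_of_notMem h', Set.indicator_of_notMem h]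

lemma moment0 (d : ℕ) (hd : 1 ≤ d) (r : ℝ) (hr : 0 < r) :
    ∫ v in ball (0 : EuclideanSpace ℝ (Fin d)) r, ‖v‖ ^ 2 =
      (d : ℝ) / ((d : ℝ) + 2) * r ^ 2 *
        (volume (ball (0 : EuclideanSpace ℝ (Fin d)) r)).toReal := by
  haveI : Nonempty (Fin d) := ⟨⟨0, hd⟩⟩
  haveI : Nontrivial (EuclideanSpace ℝ (Fin d)) := inferInstance
  have hdim : Module.finrank ℝ (EuclideanSpace ℝ (Fin d)) = d := finrank_euclideanSpace_fin
  have h1 : ∫ v in ball (0 : EuclideanSpace ℝ (Fin d)) r, ‖v‖ ^ 2 =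
      ∫ v : EuclideanSpace ℝ (Fin d), (Set.Iio r).indicator (fun t => t ^ 2) ‖v‖ := by
    rw [← integral_indicator measurableSet_ball]
    congr 1; funext v
    by_cases h : v ∈ ball (0 : EuclideanSpace ℝ (Fin d)) r
    · rw [Set.indicator_of_mem h, Set.indicator_of_mem (by simpa [mem_ball_zero_iff] using h)]
    · rw [Set.indicator_of_notMem h,
        Set.indicator_of_notMem (by simpa [mem_ball_zero_iff] using h)]
  rw [h1, integral_fun_norm_addHaar volume (fun t : ℝ => (Set.Iio r).indicator (fun t => t ^ 2) t),
    hdim]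
  have h2 : ∫ y in Set.Ioi (0:ℝ), y ^ (d - 1) • (Set.Iio r).indicator (fun t => t ^ 2) y =
      r ^ (d + 2) / (d + 2) := by
    have e1 : ∀ y : ℝ, y ^ (d - 1) • (Set.Iio r).indicator (fun t => t ^ 2) y =
        (Set.Iio r).indicator (fun t => t ^ (d - 1) * t ^ 2) y := by
      intro y; by_cases h : y ∈ Set.Iio r <;> simp [h]
    simp only [e1]
    rw [setIntegral_indicator measurableSet_Iio, Set.Ioi_inter_Iio]
    have e2 : ∀ y : ℝ, y ^ (d - 1) * y ^ 2 = y ^ (d + 1) := by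
      intro y; rw [← pow_add]; congr 1; omega
    simp only [e2]
    rw [← MeasureTheory.integral_Ioc_eq_integral_Ioo, ← intervalIntegral.integral_of_le hr.le,
      integral_pow]
    have : d + 1 + 1 = d + 2 := by omega
    rw [this]
    push_cast
    ring_nf
  rw [h2, Measure.addHaar_ball volume (0 : EuclideanSpace ℝ (Fin d)) hr.le, hdim,
    ENNReal.toReal_mul, ENNReal.toReal_ofReal (by positivity)]
  set B := (volume (ball (0 : EuclideanSpace ℝ (Fin d)) 1)).toReal
  rw [nsmul_eq_mul, smul_eq_mul]
  have hr2 : r ^ (d + 2) = r ^ d * r ^ 2 := by rw [← pow_add]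
  have hne : (d : ℝ) + 2 ≠ 0 := by positivity
  rw [hr2]
  field_simp
  ring
  rfl

lemma ball_integrable (d : ℕ) (r : ℝ) {f : EuclideanSpace ℝ (Fin d) → ℝ}
    (hf : Continuous f) (c : EuclideanSpace ℝ (Fin d)) :
    IntegrableOn f (ball c r) volume :=
  (hf.locallyIntegrable.integrableOn_isCompact (isCompact_closedBall c r)).mono_set
    ball_subset_closedBall

lemma inner_ball_zero (d : ℕ) (r : ℝ) (c : EuclideanSpace ℝ (Fin d)) :
    ∫ v in ball (0 : EuclideanSpace ℝ (Fin d)) r, (inner ℝ v c : ℝ) = 0 := by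
  have h := MeasureTheory.integral_neg_eq_self
    (fun v : EuclideanSpace ℝ (Fin d) =>
      (ball (0 : EuclideanSpace ℝ (Fin d)) r).indicator (fun u => (inner ℝ u c : ℝ)) v) volume
  have h2 : ∀ v : EuclideanSpace ℝ (Fin d),
      (ball (0 : EuclideanSpace ℝ (Fin d)) r).indicator (fun u => (inner ℝ u c : ℝ)) (-v) =
      - (ball (0 : EuclideanSpace ℝ (Fin d)) r).indicator (fun u => (inner ℝ u c : ℝ)) v := by
    intro v
    by_cases hv : v ∈ ball (0 : EuclideanSpace ℝ (Fin d)) r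
    · have hv' : -v ∈ ball (0 : EuclideanSpace ℝ (Fin d)) r := by
        simpa [mem_ball_zero_iff] using hv
      simp [Set.indicator_of_mem hv, Set.indicator_of_mem hv', inner_neg_left]
    · have hv' : -v ∉ ball (0 : EuclideanSpace ℝ (Fin d)) r := by
        simpa [mem_ball_zero_iff] using hv
      simp [Set.indicator_of_notMem hv, Set.indicator_of_notMem hv']
  simp only [h2, integral_neg] at h
  rw [← integral_indicator measurableSet_ball]
  linarith

lemma momentc (d : ℕ) (r : ℝ) (c : EuclideanSpace ℝ (Fin d)) :
    ∫ u in ball c r, ‖u‖ ^ 2 =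
      (∫ v in ball (0 : EuclideanSpace ℝ (Fin d)) r, ‖v‖ ^ 2) +
        ‖c‖ ^ 2 * (volume (ball (0 : EuclideanSpace ℝ (Fin d)) r)).toReal := by
  rw [ball_translate_s2 (fun u => ‖u‖ ^ 2) c r]
  have expand : ∀ v : EuclideanSpace ℝ (Fin d),
      ‖v + c‖ ^ 2 = ‖v‖ ^ 2 + (2 * (inner ℝ v c : ℝ) + ‖c‖ ^ 2) := by
    intro v
    rw [norm_add_sq_real]; ring
  simp only [expand]
  have i1 : IntegrableOn (fun v : EuclideanSpace ℝ (Fin d) => ‖v‖ ^ 2)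
      (ball (0 : EuclideanSpace ℝ (Fin d)) r) volume :=
    ball_integrable d r (by continuity) _
  have i2 : IntegrableOn (fun v : EuclideanSpace ℝ (Fin d) => 2 * (inner ℝ v c : ℝ) + ‖c‖ ^ 2)
      (ball (0 : EuclideanSpace ℝ (Fin d)) r) volume := by
    apply ball_integrable d r
    exact (continuous_const.mul (continuous_inner.comp
      (continuous_id.prodMk continuous_const))).add continuous_const
  rw [integral_add i1 i2]
  congr 1
  have i3 : IntegrableOn (fun v : EuclideanSpace ℝ (Fin d) => 2 * (inner ℝ v c : ℝ))
      (ball (0 : EuclideanSpace ℝ (Fin d)) r) volume := by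
    apply ball_integrable d r
    exact continuous_const.mul (continuous_inner.comp (continuous_id.prodMk continuous_const))
  rw [integral_add i3 (integrableOn_const measure_ball_lt_top.ne),
    MeasureTheory.integral_const_mul, inner_ball_zero, setIntegral_const]
  simp [mul_comm, measureReal_def]

theorem second_moment_double_ball (d : ℕ) (hd : 1 ≤ d) (r : ℝ) (hr : 0 < r)
    (x : EuclideanSpace ℝ (Fin d)) :
    ∫ y : EuclideanSpace ℝ (Fin d), ∫ z : EuclideanSpace ℝ (Fin d),
        ‖y - x‖ ^ 2 * Set.indicator (ball x r) (fun _ => (1 : ℝ)) z *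
          Set.indicator (ball y r) (fun _ => (1 : ℝ)) z =
      2 * (d : ℝ) / ((d : ℝ) + 2) * r ^ 2 *
        ((volume (ball (0 : EuclideanSpace ℝ (Fin d)) r)).toReal) ^ 2 := by
  set V : ℝ := (volume (ball (0 : EuclideanSpace ℝ (Fin d)) r)).toReal with hV
  set M0 : ℝ := ∫ v in ball (0 : EuclideanSpace ℝ (Fin d)) r, ‖v‖ ^ 2 with hM0
  set F : EuclideanSpace ℝ (Fin d) → EuclideanSpace ℝ (Fin d) → ℝ := fun y z =>
    ‖y - x‖ ^ 2 * Set.indicator (ball x r) (fun _ => (1 : ℝ)) z *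
      Set.indicator (ball y r) (fun _ => (1 : ℝ)) z with hF
  have hT : MeasurableSet {p : EuclideanSpace ℝ (Fin d) × EuclideanSpace ℝ (Fin d) |
      dist p.2 p.1 < r} :=
    (isOpen_lt (continuous_dist.comp (continuous_snd.prodMk continuous_fst))
      continuous_const).measurableSet
  have key_eq : ∀ p : EuclideanSpace ℝ (Fin d) × EuclideanSpace ℝ (Fin d),
      Set.indicator (ball p.1 r) (fun _ => (1 : ℝ)) p.2 =
        Set.indicator {q : EuclideanSpace ℝ (Fin d) × EuclideanSpace ℝ (Fin d) |
          dist q.2 q.1 < r} (fun _ => (1 : ℝ)) p := by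
    intro p
    by_cases h : dist p.2 p.1 < r <;> simp [Set.indicator, mem_ball, h]
  have hmeas : AEStronglyMeasurable (Function.uncurry F) (volume.prod volume) := by
    have hrw : Function.uncurry F = fun p :
        EuclideanSpace ℝ (Fin d) × EuclideanSpace ℝ (Fin d) =>
        ‖p.1 - x‖ ^ 2 * Set.indicator (ball x r) (fun _ => (1 : ℝ)) p.2 *
          Set.indicator {q : EuclideanSpace ℝ (Fin d) × EuclideanSpace ℝ (Fin d) |
            dist q.2 q.1 < r} (fun _ => (1 : ℝ)) p := by
      funext p
      simp only [Function.uncurry, hF]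
      rw [key_eq p]
    rw [hrw]
    refine Measurable.aestronglyMeasurable (Measurable.mul (Measurable.mul ?_ ?_) ?_)
    · exact ((continuous_fst.sub continuous_const).norm.pow 2).measurable
    · exact (measurable_const.indicator measurableSet_ball).comp measurable_snd
    · exact measurable_const.indicator hT
  have hbound : ∀ p : EuclideanSpace ℝ (Fin d) × EuclideanSpace ℝ (Fin d),
      ‖Function.uncurry F p‖ ≤
        Set.indicator (ball x (2 * r) ×ˢ ball x r) (fun _ => (2 * r) ^ 2) p := by
    rintro ⟨y, z⟩
    simp only [Function.uncurry, hF]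
    by_cases h1 : z ∈ ball x r
    · by_cases h2 : z ∈ ball y r
      · have hy : y ∈ ball x (2 * r) := by
          rw [mem_ball]
          calc dist y x ≤ dist y z + dist z x := dist_triangle y z x
            _ < r + r := by
                have := mem_ball.1 h2
                have := mem_ball.1 h1
                rw [dist_comm] at *
                linarith [mem_ball.1 h2, mem_ball.1 h1]
            _ = 2 * r := by ring
        have hmem : (y, z) ∈ ball x (2 * r) ×ˢ ball x r := ⟨hy, h1⟩
        rw [Set.indicator_of_mem h1, Set.indicator_of_mem h2, Set.indicator_of_mem hmem]
        have hle : ‖y - x‖ ≤ 2 * r := by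
          have := mem_ball_iff_norm.1 hy
          linarith
        rw [mul_one, mul_one, Real.norm_eq_abs, abs_of_nonneg (by positivity)]
        exact pow_le_pow_left₀ (norm_nonneg _) hle 2
      · rw [Set.indicator_of_notMem h2, mul_zero, norm_zero]
        exact Set.indicator_nonneg (fun _ _ => by positivity) _
    · rw [Set.indicator_of_notMem h1, mul_zero, zero_mul, norm_zero]
      exact Set.indicator_nonneg (fun _ _ => by positivity) _
  have hint : Integrable (Function.uncurry F) (volume.prod volume) := by
    refine Integrable.mono' ?_ hmeas (Filter.Eventually.of_forall hbound)
    rw [integrable_indicator_iff (measurableSet_ball.prod measurableSet_ball)]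
    refine integrableOn_const (ne_of_lt ?_)
    rw [Measure.prod_prod]
    exact ENNReal.mul_lt_top measure_ball_lt_top measure_ball_lt_top
  have hswap : (∫ y : EuclideanSpace ℝ (Fin d), ∫ z : EuclideanSpace ℝ (Fin d), F y z) =
      ∫ z : EuclideanSpace ℝ (Fin d), ∫ y : EuclideanSpace ℝ (Fin d), F y z :=
    integral_integral_swap hint
  have inner_eq : ∀ z : EuclideanSpace ℝ (Fin d),
      (∫ y : EuclideanSpace ℝ (Fin d), F y z) =
        Set.indicator (ball x r) (fun _ => (1 : ℝ)) z * (M0 + ‖z - x‖ ^ 2 * V) := by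
    intro z
    have e1 : ∀ y : EuclideanSpace ℝ (Fin d), F y z =
        Set.indicator (ball x r) (fun _ => (1 : ℝ)) z *
          Set.indicator (ball z r) (fun y' => ‖y' - x‖ ^ 2) y := by
      intro y
      simp only [hF]
      by_cases h : y ∈ ball z r
      · have h' : z ∈ ball y r := by rwa [mem_ball, dist_comm, ← mem_ball] at h
        rw [Set.indicator_of_mem h', Set.indicator_of_mem h]
        ring
      · have h' : z ∉ ball y r := by rwa [mem_ball, dist_comm, ← mem_ball] at h
        rw [Set.indicator_of_notMem h', Set.indicator_of_notMem h, mul_zero, mul_zero]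
    rw [integral_congr_ae (Filter.Eventually.of_forall e1), MeasureTheory.integral_const_mul,
      integral_indicator measurableSet_ball]
    congr 1
    have t1 : (∫ y in ball z r, ‖y - x‖ ^ 2) =
        ∫ v in ball (0 : EuclideanSpace ℝ (Fin d)) r, ‖v + z - x‖ ^ 2 :=
      ball_translate_s2 (fun y => ‖y - x‖ ^ 2) z r
    have t2 : (∫ u in ball (z - x) r, ‖u‖ ^ 2) =
        ∫ v in ball (0 : EuclideanSpace ℝ (Fin d)) r, ‖v + (z - x)‖ ^ 2 :=
      ball_translate_s2 (fun u => ‖u‖ ^ 2) (z - x) r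
    have t3 : (∫ y in ball z r, ‖y - x‖ ^ 2) = ∫ u in ball (z - x) r, ‖u‖ ^ 2 := by
      rw [t1, t2]
      simp only [add_sub_assoc]
    rw [t3, momentc d r (z - x)]
  rw [show (∫ y : EuclideanSpace ℝ (Fin d), ∫ z : EuclideanSpace ℝ (Fin d),
        ‖y - x‖ ^ 2 * Set.indicator (ball x r) (fun _ => (1 : ℝ)) z *
          Set.indicator (ball y r) (fun _ => (1 : ℝ)) z) =
      ∫ y : EuclideanSpace ℝ (Fin d), ∫ z : EuclideanSpace ℝ (Fin d), F y z from rfl,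
    hswap, integral_congr_ae (Filter.Eventually.of_forall inner_eq)]
  have e2 : ∀ z : EuclideanSpace ℝ (Fin d),
      Set.indicator (ball x r) (fun _ => (1 : ℝ)) z * (M0 + ‖z - x‖ ^ 2 * V) =
        Set.indicator (ball x r) (fun z' => M0 + ‖z' - x‖ ^ 2 * V) z := by
    intro z
    by_cases h : z ∈ ball x r <;> simp [h]
  rw [integral_congr_ae (Filter.Eventually.of_forall e2), integral_indicator measurableSet_ball]
  have i1 : IntegrableOn (fun _ : EuclideanSpace ℝ (Fin d) => M0) (ball x r) volume :=
    integrableOn_const measure_ball_lt_top.ne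
  have i2 : IntegrableOn (fun z : EuclideanSpace ℝ (Fin d) => ‖z - x‖ ^ 2 * V)
      (ball x r) volume :=
    ball_integrable d r (((continuous_id.sub continuous_const).norm.pow 2).mul
      continuous_const) x
  rw [integral_add i1 i2, setIntegral_const, MeasureTheory.integral_mul_const]
  have t4 : (∫ z in ball x r, ‖z - x‖ ^ 2) = M0 := by
    rw [ball_translate_s2 (fun z => ‖z - x‖ ^ 2) x r]
    simp only [add_sub_cancel_right]
    rfl
  have t5 : (volume (ball x r)).toReal = V := by
    rw [hV, Measure.addHaar_ball_center]
  rw [t4, measureReal_def, t5, hM0, moment0 d hd r hr, ← hV, smul_eq_mul]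
  ring
end

section
/- Let d ≥ 1 and α ∈ (0, min(2,d)). Let F : ℝ → ℝ be twice continuously differentiable with F, F' and F'' bounded. There exists a constant C > 0, depending only on d, α and the supremum norms of F, F' and F'', such that for every δ ∈ (0,1] and every twice continuously differentiable φ : ℝ^d → [0,1] with bounded first and second partial derivatives, sup_{x∈ℝ^d} |F^{(δ)}(φ)(x) − F(φ(x))| ≤ C · δ^α · (1 + max_{|β|=1} ‖∂_β φ‖_∞² + max_{|β|=2} ‖∂_β φ‖_∞). -/
open MeasureTheory Metric

/-- `F^{(δ)}(φ)(x) = α ∫_1^∞ ⟨F(⟨φ⟩(·,δr))⟩(x,δr) r^{-(1+α)} dr`. -/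
noncomputable def Fdelta (d : ℕ) (α δ : ℝ) (F : ℝ → ℝ)
    (φ : EuclideanSpace ℝ (Fin d) → ℝ) (x : EuclideanSpace ℝ (Fin d)) : ℝ :=
  α * ∫ r in Set.Ioi (1 : ℝ),
    ballAvg d (fun y => F (ballAvg d φ y (δ * r))) x (δ * r) * r ^ (-(1 + α))


section Aux
variable {d : ℕ}
local notation "Ed" => EuclideanSpace ℝ (Fin d)

lemma vol_ball_pos (hd : 1 ≤ d) {s : ℝ} (hs : 0 < s) (x : Ed) :
    0 < (volume (ball x s)).toReal := by
  haveI : Nontrivial Ed := by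
    refine ⟨EuclideanSpace.single ⟨0, hd⟩ 1, 0, ?_⟩
    intro h
    have := congrArg (fun v : Ed => v (⟨0, hd⟩ : Fin d)) h
    simp at this
  exact ENNReal.toReal_pos (measure_ball_pos volume x hs).ne' measure_ball_lt_top.ne

lemma trans_ball_integral (f : Ed → ℝ) (x : Ed) (s : ℝ) :
    ∫ y in ball x s, f y = ∫ z in ball (0 : Ed) s, f (x + z) := by
  rw [← integral_indicator measurableSet_ball, ← integral_indicator measurableSet_ball]
  rw [← integral_add_left_eq_self (fun y => (ball x s).indicator f y) x]
  congr 1 with z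
  by_cases hz : z ∈ ball (0 : Ed) s
  · have hz' : x + z ∈ ball x s := by
      simpa [mem_ball, dist_eq_norm] using (by simpa [mem_ball, dist_eq_norm] using hz)
    rw [Set.indicator_of_mem hz', Set.indicator_of_mem hz]
  · have hz' : x + z ∉ ball x s := by
      simp only [mem_ball, dist_eq_norm] at hz ⊢
      simpa using hz
    rw [Set.indicator_of_notMem hz', Set.indicator_of_notMem hz]

lemma integral_ball_linear_zero (L : Ed →L[ℝ] ℝ) (x : Ed) (s : ℝ) :
    ∫ y in ball x s, L (y - x) = 0 := by
  have h1 : ∫ y in ball x s, L (y - x) = ∫ z in ball (0 : Ed) s, L z := by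
    rw [trans_ball_integral (fun y => L (y - x)) x s]
    simp
  rw [h1, ← integral_indicator measurableSet_ball]
  set g : Ed → ℝ := (ball (0 : Ed) s).indicator (fun z => L z) with hg
  have hneg : ∀ z, g (-z) = - g z := by
    intro z
    by_cases hz : z ∈ ball (0 : Ed) s
    · have hz' : -z ∈ ball (0 : Ed) s := by simpa [mem_ball, dist_eq_norm] using hz
      simp [hg, Set.indicator_of_mem hz, Set.indicator_of_mem hz']
    · have hz' : -z ∉ ball (0 : Ed) s := by
        simp only [mem_ball, dist_eq_norm] at hz ⊢; simpa using hz
      simp [hg, Set.indicator_of_notMem hz, Set.indicator_of_notMem hz']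
  have h2 : ∫ z, g (-z) = ∫ z, g z := integral_neg_eq_self g volume
  have h3 : ∫ z, g (-z) = - ∫ z, g z := by
    simp only [hneg]; exact integral_neg _
  have : ∫ z, g z = 0 := by linarith [h2, h3, h2 ▸ h3]
  exact this

end Aux


section Aux
variable {d : ℕ}
local notation "Ed" => EuclideanSpace ℝ (Fin d)

lemma vol_ball_eq (x : Ed) (s : ℝ) : volume (ball x s) = volume (ball (0 : Ed) s) := by
  simpa using (Measure.addHaar_ball_center volume x s)

-- integrability of bounded continuous on ball
lemma integrableOn_ball_of_bounded {g : Ed → ℝ} (hc : Continuous g) {C : ℝ}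
    (hb : ∀ y, |g y| ≤ C) (x : Ed) (s : ℝ) : IntegrableOn g (ball x s) volume := by
  exact Measure.integrableOn_of_bounded measure_ball_lt_top.ne hc.aestronglyMeasurable
    (Filter.Eventually.of_forall (fun y => by simpa using hb y))

/-- Average-vs-value bound for functions with Lipschitz derivative. -/
lemma ballAvg_sub_le (hd : 1 ≤ d) {g : Ed → ℝ} (hg : Differentiable ℝ g)
    (hc : Continuous g) {C K : ℝ} (hb : ∀ y, |g y| ≤ C) (h0K : 0 ≤ K)
    (hK : ∀ y z, ‖fderiv ℝ g y - fderiv ℝ g z‖ ≤ K * ‖y - z‖)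
    (x : Ed) {s : ℝ} (hs : 0 < s) :
    |ballAvg d g x s - g x| ≤ K * s ^ 2 := by
  set L := fderiv ℝ g x with hL
  set V := (volume (ball (0 : Ed) s)).toReal with hV
  have hV0 : 0 < V := by rw [hV, ← vol_ball_eq (0:Ed) s]; exact vol_ball_pos hd hs 0
  have hVx : (volume (ball x s)).toReal = V := by rw [hV, vol_ball_eq]
  -- pointwise Taylor bound on the ball
  have key : ∀ y ∈ ball x s, |g y - g x - L (y - x)| ≤ K * s * ‖y - x‖ := by
    intro y hy
    have hdiff : ∀ z ∈ ball x s, DifferentiableAt ℝ (fun w => g w - L w) z :=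
      fun z _ => (hg z).sub (L.differentiable z)
    have hbound : ∀ z ∈ ball x s, ‖fderiv ℝ (fun w => g w - L w) z‖ ≤ K * s := by
      intro z hz
      have : fderiv ℝ (fun w => g w - L w) z = fderiv ℝ g z - L := by
        rw [fderiv_fun_sub (hg z) (L.differentiableAt)]
        simp [L.fderiv]
      rw [this]
      calc ‖fderiv ℝ g z - L‖ ≤ K * ‖z - x‖ := hK z x
        _ ≤ K * s := by
            have : ‖z - x‖ ≤ s := by
              rw [mem_ball, dist_eq_norm] at hz; exact hz.le
            nlinarith [norm_nonneg (z - x)]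
    have := Convex.norm_image_sub_le_of_norm_fderiv_le hdiff hbound (convex_ball x s) (mem_ball_self hs) hy
    have heq : (g y - L y) - (g x - L x) = g y - g x - L (y - x) := by
      have := L.map_sub y x; simp only [this]; ring
    calc |g y - g x - L (y - x)| = ‖(g y - L y) - (g x - L x)‖ := by rw [heq.symm]; rfl
      _ ≤ (K * s) * ‖y - x‖ := this
  -- rewrite the average
  have hint_g : IntegrableOn g (ball x s) volume := integrableOn_ball_of_bounded hc hb x s
  have hint_L : IntegrableOn (fun y => L (y - x)) (ball x s) volume := by
    apply Measure.integrableOn_of_bounded (M := ‖L‖ * s) measure_ball_lt_top.ne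
      ((L.continuous.comp (by continuity)).aestronglyMeasurable)
    filter_upwards [ae_restrict_mem measurableSet_ball] with y hy
    calc ‖L (y - x)‖ ≤ ‖L‖ * ‖y - x‖ := L.le_opNorm _
      _ ≤ ‖L‖ * s := by
          have : ‖y - x‖ ≤ s := by rw [mem_ball, dist_eq_norm] at hy; exact hy.le
          nlinarith [norm_nonneg L, norm_nonneg (y - x)]
  have hconst : IntegrableOn (fun _ : Ed => g x) (ball x s) volume :=
    integrableOn_const measure_ball_lt_top.ne
  have e1 : ∫ y in ball x s, (g y - g x - L (y - x)) =
      (∫ y in ball x s, (g y - g x)) - (∫ y in ball x s, L (y - x)) :=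
    integral_sub (hint_g.sub hconst) hint_L
  have e2 : (∫ y in ball x s, (g y - g x)) = (∫ y in ball x s, g y) - V * g x := by
    rw [integral_sub hint_g hconst, setIntegral_const]
    simp [hVx, smul_eq_mul]
    exact Or.inl hVx
  have hsplit : ∫ y in ball x s, (g y - g x - L (y - x)) =
      (∫ y in ball x s, g y) - V * g x := by
    rw [e1, e2, integral_ball_linear_zero]; ring
  have hnorm : |∫ y in ball x s, (g y - g x - L (y - x))| ≤ (K * s * s) * V := by
    rw [← hVx, ← Real.norm_eq_abs]
    apply norm_setIntegral_le_of_norm_le_const measure_ball_lt_top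
    intro y hy
    rw [Real.norm_eq_abs]
    calc ‖g y - g x - L (y - x)‖ ≤ K * s * ‖y - x‖ := key y hy
      _ ≤ K * s * s := by
          have h1 : ‖y - x‖ ≤ s := by rw [mem_ball, dist_eq_norm] at hy; exact hy.le
          have := mul_le_mul_of_nonneg_left h1 (mul_nonneg h0K hs.le)
          linarith
  have : ballAvg d g x s - g x = V⁻¹ * ∫ y in ball x s, (g y - g x - L (y - x)) := by
    rw [hsplit, ballAvg, ← hV]
    field_simp
  rw [this, abs_mul, abs_of_nonneg (inv_nonneg.2 hV0.le)]
  calc V⁻¹ * |∫ y in ball x s, (g y - g x - L (y - x))| ≤ V⁻¹ * ((K * s * s) * V) := by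
        apply mul_le_mul_of_nonneg_left hnorm (inv_nonneg.2 hV0.le)
    _ = K * s ^ 2 := by field_simp

/-- Average bounded by sup bound. -/
lemma abs_ballAvg_le (hd : 1 ≤ d) {g : Ed → ℝ} {C : ℝ}
    (hb : ∀ y, |g y| ≤ C) (x : Ed) {s : ℝ} (hs : 0 < s) :
    |ballAvg d g x s| ≤ C := by
  have hV0 : 0 < (volume (ball (0:Ed) s)).toReal := vol_ball_pos hd hs 0
  have hVx : (volume (ball x s)).toReal = (volume (ball (0:Ed) s)).toReal := by
    rw [vol_ball_eq]
  have h1 : |∫ y in ball x s, g y| ≤ C * (volume (ball x s)).toReal := by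
    rw [← Real.norm_eq_abs]
    exact norm_setIntegral_le_of_norm_le_const measure_ball_lt_top
      (fun y _ => by simpa using hb y)
  rw [ballAvg, abs_mul, abs_of_nonneg (inv_nonneg.2 hV0.le)]
  rw [hVx] at h1
  calc (volume (ball (0:Ed) s)).toReal⁻¹ * |∫ y in ball x s, g y|
      ≤ (volume (ball (0:Ed) s)).toReal⁻¹ * (C * (volume (ball (0:Ed) s)).toReal) :=
        mul_le_mul_of_nonneg_left h1 (inv_nonneg.2 hV0.le)
    _ = C := by field_simp

end Aux

section Aux
variable {d : ℕ}
local notation "Ed" => EuclideanSpace ℝ (Fin d)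

lemma abs_coord_le_norm (u : Ed) (i : Fin d) : |u i| ≤ ‖u‖ := by
  rw [EuclideanSpace.norm_eq]
  have h1 : |u i| = Real.sqrt (u i ^ 2) := by
    rw [Real.sqrt_sq_eq_abs]
  rw [h1]
  apply Real.sqrt_le_sqrt
  have : u i ^ 2 = ‖u i‖ ^ 2 := by rw [Real.norm_eq_abs, sq_abs]
  rw [this]
  exact Finset.single_le_sum (f := fun j => ‖u j‖ ^ 2) (fun j _ => sq_nonneg _)
    (Finset.mem_univ i)

lemma opnorm_le_of_single {W : Type*} [NormedAddCommGroup W] [NormedSpace ℝ W]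
    (L : Ed →L[ℝ] W) {S : ℝ} (h0 : 0 ≤ S)
    (h : ∀ i, ‖L (EuclideanSpace.single i (1:ℝ))‖ ≤ S) : ‖L‖ ≤ d * S := by
  apply ContinuousLinearMap.opNorm_le_bound _ (by positivity)
  intro u
  have hu : ∑ i, u i • (EuclideanSpace.single i (1:ℝ)) = u := by
    have := (EuclideanSpace.basisFun (Fin d) ℝ).sum_repr u
    simpa [EuclideanSpace.basisFun_apply, EuclideanSpace.basisFun_repr] using this
  have hLu : L u = ∑ i, u i • L (EuclideanSpace.single i (1:ℝ)) := by
    conv_lhs => rw [← hu]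
    rw [map_sum]
    exact Finset.sum_congr rfl (fun i _ => L.map_smul _ _)
  calc ‖L u‖ = ‖∑ i, u i • L (EuclideanSpace.single i (1:ℝ))‖ := by rw [hLu]
    _ ≤ ∑ i, ‖u i • L (EuclideanSpace.single i (1:ℝ))‖ :=
        norm_sum_le Finset.univ (fun i => u i • L (EuclideanSpace.single i (1:ℝ)))
    _ ≤ ∑ _i : Fin d, S * ‖u‖ := by
        apply Finset.sum_le_sum
        intro i _
        rw [norm_smul, Real.norm_eq_abs]
        calc |u i| * ‖L (EuclideanSpace.single i (1:ℝ))‖ ≤ ‖u‖ * S := by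
              apply mul_le_mul (abs_coord_le_norm u i) (h i) (norm_nonneg _) (norm_nonneg _)
          _ = S * ‖u‖ := mul_comm _ _
    _ = d * S * ‖u‖ := by simp [Finset.sum_const, Finset.card_univ]; ring

end Aux

section Aux
variable {d : ℕ}
local notation "Ed" => EuclideanSpace ℝ (Fin d)

lemma lip_of_fderiv_bound {X W : Type*} [NormedAddCommGroup X] [NormedSpace ℝ X]
    [NormedAddCommGroup W] [NormedSpace ℝ W]
    {g : X → W} (hg : Differentiable ℝ g) {A : ℝ}
    (hA : ∀ y, ‖fderiv ℝ g y‖ ≤ A) (y z : X) : ‖g y - g z‖ ≤ A * ‖y - z‖ :=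
  Convex.norm_image_sub_le_of_norm_fderiv_le (fun x _ => (hg x))
    (fun x _ => hA x) convex_univ (Set.mem_univ z) (Set.mem_univ y)

lemma lip_of_deriv_bound {F : ℝ → ℝ} (hF : Differentiable ℝ F) {A : ℝ}
    (hA : ∀ y, |deriv F y| ≤ A) (a b : ℝ) : |F a - F b| ≤ A * |a - b| := by
  have h : ∀ y, ‖fderiv ℝ F y‖ ≤ A := by
    intro y; rw [← norm_deriv_eq_norm_fderiv]; simpa using hA y
  simpa [Real.norm_eq_abs] using lip_of_fderiv_bound hF h a b

lemma norm_fderiv_sub_real (F : ℝ → ℝ) (a b : ℝ) :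
    ‖fderiv ℝ F a - fderiv ℝ F b‖ ≤ |deriv F a - deriv F b| := by
  apply ContinuousLinearMap.opNorm_le_bound _ (abs_nonneg _)
  intro t
  rw [ContinuousLinearMap.sub_apply]
  rw [fderiv_eq_smul_deriv, fderiv_eq_smul_deriv]
  simp only [smul_eq_mul, Real.norm_eq_abs, ← mul_sub, abs_mul]
  ring_nf
  exact le_of_eq (by ring)

lemma deriv_lip {F : ℝ → ℝ} (hF : ContDiff ℝ 2 F) {M : ℝ}
    (hM : ∀ y, |deriv (deriv F) y| ≤ M) (a b : ℝ) :
    |deriv F a - deriv F b| ≤ M * |a - b| := by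
  have h2 : ContDiff ℝ (1+1) F := by rw [one_add_one_eq_two]; exact hF
  have hd : Differentiable ℝ (deriv F) := by
    have := (contDiff_succ_iff_deriv.mp h2).2.2
    exact this.differentiable one_ne_zero
  exact lip_of_deriv_bound hd hM a b

lemma fderivphi_lip {φ : Ed → ℝ} (hφ : ContDiff ℝ 2 φ) {A : ℝ}
    (hA : ∀ y, ‖fderiv ℝ (fderiv ℝ φ) y‖ ≤ A) (y z : Ed) :
    ‖fderiv ℝ φ y - fderiv ℝ φ z‖ ≤ A * ‖y - z‖ := by
  have h1 : ContDiff ℝ 1 (fderiv ℝ φ) := hφ.fderiv_right (le_of_eq one_add_one_eq_two)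
  exact lip_of_fderiv_bound (h1.differentiable one_ne_zero) hA y z

lemma comp_fderiv_lip {φ : Ed → ℝ} {F : ℝ → ℝ}
    (hφ : ContDiff ℝ 2 φ) (hF : ContDiff ℝ 2 F) {M L1 L2 : ℝ}
    (hM1 : ∀ y, |deriv F y| ≤ M) (hM2 : ∀ y, |deriv (deriv F) y| ≤ M)
    (hL1 : ∀ y, ‖fderiv ℝ φ y‖ ≤ L1)
    (hL2 : ∀ y z, ‖fderiv ℝ φ y - fderiv ℝ φ z‖ ≤ L2 * ‖y - z‖)
    (y z : Ed) :
    ‖fderiv ℝ (fun w => F (φ w)) y - fderiv ℝ (fun w => F (φ w)) z‖ ≤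
      (M * L1 ^ 2 + M * L2) * ‖y - z‖ := by
  have hφd : Differentiable ℝ φ := hφ.differentiable (by norm_num)
  have hFd : Differentiable ℝ F := hF.differentiable (by norm_num)
  have hcomp : ∀ w : Ed, fderiv ℝ (fun w => F (φ w)) w =
      (fderiv ℝ F (φ w)).comp (fderiv ℝ φ w) := by
    intro w
    exact fderiv_comp w (hFd (φ w)) (hφd w)
  rw [hcomp y, hcomp z]
  set Ay := fderiv ℝ F (φ y); set Az := fderiv ℝ F (φ z)
  set By := fderiv ℝ φ y; set Bz := fderiv ℝ φ z
  have hsplit : Ay.comp By - Az.comp Bz = (Ay - Az).comp By + Az.comp (By - Bz) := by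
    ext w
    simp only [ContinuousLinearMap.add_apply, ContinuousLinearMap.sub_apply,
      ContinuousLinearMap.comp_apply, ContinuousLinearMap.sub_apply, map_sub]
    ring
  rw [hsplit]
  have hL1nn : 0 ≤ L1 := le_trans (norm_nonneg _) (hL1 y)
  have hMnn : 0 ≤ M := le_trans (abs_nonneg _) (hM1 0)
  have t1 : ‖(Ay - Az).comp By‖ ≤ (M * L1 ^ 2) * ‖y - z‖ := by
    calc ‖(Ay - Az).comp By‖ ≤ ‖Ay - Az‖ * ‖By‖ := ContinuousLinearMap.opNorm_comp_le _ _
      _ ≤ (M * (L1 * ‖y - z‖)) * L1 := by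
          apply mul_le_mul _ (hL1 y) (norm_nonneg _) (by positivity)
          calc ‖Ay - Az‖ ≤ |deriv F (φ y) - deriv F (φ z)| := norm_fderiv_sub_real F _ _
            _ ≤ M * |φ y - φ z| := deriv_lip hF hM2 _ _
            _ ≤ M * (L1 * ‖y - z‖) := by
                apply mul_le_mul_of_nonneg_left _ hMnn
                simpa [Real.norm_eq_abs] using lip_of_fderiv_bound hφd hL1 y z
      _ = (M * L1 ^ 2) * ‖y - z‖ := by ring
  have t2 : ‖Az.comp (By - Bz)‖ ≤ (M * L2) * ‖y - z‖ := by
    calc ‖Az.comp (By - Bz)‖ ≤ ‖Az‖ * ‖By - Bz‖ := ContinuousLinearMap.opNorm_comp_le _ _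
      _ ≤ M * (L2 * ‖y - z‖) := by
          apply mul_le_mul _ (hL2 y z) (norm_nonneg _) hMnn
          rw [← norm_deriv_eq_norm_fderiv]
          simpa using hM1 (φ z)
      _ = (M * L2) * ‖y - z‖ := by ring
  calc ‖(Ay - Az).comp By + Az.comp (By - Bz)‖ ≤ ‖(Ay - Az).comp By‖ + ‖Az.comp (By - Bz)‖ :=
        norm_add_le _ _
    _ ≤ (M * L1 ^ 2) * ‖y - z‖ + (M * L2) * ‖y - z‖ := add_le_add t1 t2
    _ = (M * L1 ^ 2 + M * L2) * ‖y - z‖ := by ring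

end Aux


section Aux
variable {d : ℕ}
local notation "Ed" => EuclideanSpace ℝ (Fin d)

lemma nontrivial_Ed (hd : 1 ≤ d) : Nontrivial Ed := by
  refine ⟨EuclideanSpace.single ⟨0, hd⟩ 1, 0, ?_⟩
  intro h
  have := congrArg (fun v : Ed => v (⟨0, hd⟩ : Fin d)) h
  simp at this

lemma sphere_null (hd : 1 ≤ d) (x : Ed) (s : ℝ) : volume (sphere x s) = 0 := by
  haveI := nontrivial_Ed hd
  exact Measure.addHaar_sphere volume x s

lemma ae_not_sphere (hd : 1 ≤ d) (x : Ed) (s : ℝ) :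
    ∀ᵐ z : Ed, dist z x ≠ s := by
  have h : ∀ᵐ z : Ed, z ∉ sphere x s := by
    rw [ae_iff]
    push_neg
    exact sphere_null hd x s
  filter_upwards [h] with z hz
  exact hz

/-- Joint continuity of the set integral over balls. -/
lemma contAt_ball_integral (hd : 1 ≤ d) {φ : Ed → ℝ} (hφc : Continuous φ)
    (hb : ∀ y, |φ y| ≤ 1) (y₀ : Ed) {s₀ : ℝ} (hs₀ : 0 < s₀) :
    ContinuousAt (fun p : Ed × ℝ => ∫ z in ball p.1 p.2, φ z) (y₀, s₀) := by
  have hrw : (fun p : Ed × ℝ => ∫ z in ball p.1 p.2, φ z) =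
      fun p => ∫ z, (ball p.1 p.2).indicator φ z := by
    funext p; rw [integral_indicator measurableSet_ball]
  rw [hrw]
  apply continuousAt_of_dominated (bound := (ball y₀ (s₀ + 2)).indicator fun _ => (1:ℝ))
  · exact Filter.Eventually.of_forall fun p =>
      (hφc.aestronglyMeasurable).indicator measurableSet_ball
  · apply Filter.eventually_of_mem (Metric.ball_mem_nhds (y₀, s₀) one_pos)
    intro p hp
    apply Filter.Eventually.of_forall
    intro z
    rw [mem_ball, Prod.dist_eq] at hp
    by_cases hz : z ∈ ball p.1 p.2
    · have h1 : dist p.1 y₀ < 1 := lt_of_le_of_lt (le_max_left _ _) hp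
      have h2 : |p.2 - s₀| < 1 := by
        have := lt_of_le_of_lt (le_max_right _ _) hp
        simpa [Real.dist_eq] using this
      have hz2 : z ∈ ball y₀ (s₀ + 2) := by
        rw [mem_ball] at hz ⊢
        calc dist z y₀ ≤ dist z p.1 + dist p.1 y₀ := dist_triangle _ _ _
          _ < p.2 + 1 := by linarith
          _ ≤ s₀ + 2 := by cases' abs_lt.mp h2 with hl hr; linarith
      rw [Set.indicator_of_mem hz, Set.indicator_of_mem hz2]
      simpa using hb z
    · rw [Set.indicator_of_notMem hz]
      simp only [norm_zero]
      by_cases hz2 : z ∈ ball y₀ (s₀ + 2)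
      · rw [Set.indicator_of_mem hz2]; norm_num
      · rw [Set.indicator_of_notMem hz2]
  · exact (integrable_indicator_iff measurableSet_ball).2
      (integrableOn_const measure_ball_lt_top.ne)
  · filter_upwards [ae_not_sphere hd y₀ s₀] with z hz
    by_cases hlt : dist z y₀ < s₀
    · have hU : IsOpen {p : Ed × ℝ | dist z p.1 < p.2} := by
        have : Continuous fun p : Ed × ℝ => p.2 - dist z p.1 :=
          continuous_snd.sub ((continuous_const.dist continuous_fst))
        have := isOpen_Ioi (a := (0:ℝ)) |>.preimage this
        convert this using 1
        ext p; simp [sub_pos]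
      have hmem : (y₀, s₀) ∈ {p : Ed × ℝ | dist z p.1 < p.2} := hlt
      apply ContinuousAt.congr continuousAt_const
      filter_upwards [hU.mem_nhds hmem] with p hp
      rw [Set.indicator_of_mem (by simpa [mem_ball] using hp)]
    · have hgt : s₀ < dist z y₀ := lt_of_le_of_ne (not_lt.mp hlt) (Ne.symm hz)
      have hU : IsOpen {p : Ed × ℝ | p.2 < dist z p.1} := by
        have : Continuous fun p : Ed × ℝ => dist z p.1 - p.2 :=
          ((continuous_const.dist continuous_fst)).sub continuous_snd
        have := isOpen_Ioi (a := (0:ℝ)) |>.preimage this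
        convert this using 1
        ext p; simp [sub_pos]
      have hmem : (y₀, s₀) ∈ {p : Ed × ℝ | p.2 < dist z p.1} := hgt
      apply ContinuousAt.congr (continuousAt_const (y := (0:ℝ)))
      filter_upwards [hU.mem_nhds hmem] with p hp
      rw [Set.indicator_of_notMem (by simp only [mem_ball]; exact not_lt.mpr (le_of_lt hp))]

end Aux

section Aux2
variable {d : ℕ}
local notation "Ed" => EuclideanSpace ℝ (Fin d)

lemma vol_toReal_eq (hd : 1 ≤ d) {s : ℝ} (hs : 0 ≤ s) :
    (volume (ball (0:Ed) s)).toReal = s ^ d * (volume (ball (0:Ed) 1)).toReal := by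
  haveI := nontrivial_Ed hd
  rw [Measure.addHaar_ball volume (0:Ed) hs]
  rw [ENNReal.toReal_mul, ENNReal.toReal_ofReal (by positivity)]
  congr 2
  simp [finrank_euclideanSpace]

lemma vol_ball_pos' (hd : 1 ≤ d) {s : ℝ} (hs : 0 < s) (x : Ed) :
    0 < (volume (ball x s)).toReal :=
  ENNReal.toReal_pos (measure_ball_pos volume x hs).ne' measure_ball_lt_top.ne

lemma contAt_volinv (hd : 1 ≤ d) {s₀ : ℝ} (hs₀ : 0 < s₀) :
    ContinuousAt (fun s : ℝ => (volume (ball (0:Ed) s)).toReal⁻¹) s₀ := by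
  set c := (volume (ball (0:Ed) 1)).toReal with hc
  have hcpos : 0 < c := vol_ball_pos' hd one_pos 0
  have hg : ContinuousAt (fun s : ℝ => (s ^ d * c)⁻¹) s₀ := by
    apply ContinuousAt.inv₀ (by fun_prop) (by positivity)
  apply hg.congr
  filter_upwards [isOpen_Ioi.mem_nhds hs₀] with s hs
  rw [vol_toReal_eq hd (le_of_lt hs)]

/-- Joint continuity of ballAvg. -/
lemma contAt_ballAvg (hd : 1 ≤ d) {φ : Ed → ℝ} (hφc : Continuous φ)
    (hb : ∀ y, |φ y| ≤ 1) (y₀ : Ed) {s₀ : ℝ} (hs₀ : 0 < s₀) :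
    ContinuousAt (fun p : Ed × ℝ => ballAvg d φ p.1 p.2) (y₀, s₀) := by
  unfold ballAvg
  apply ContinuousAt.mul
  · exact ContinuousAt.comp (g := fun s : ℝ => (volume (ball (0:Ed) s)).toReal⁻¹) (f := Prod.snd) (contAt_volinv hd hs₀) (continuousAt_snd)
  · exact contAt_ball_integral hd hφc hb y₀ hs₀

lemma cont_ballAvg_fixed (hd : 1 ≤ d) {φ : Ed → ℝ} (hφc : Continuous φ)
    (hb : ∀ y, |φ y| ≤ 1) {s : ℝ} (hs : 0 < s) :
    Continuous (fun y : Ed => ballAvg d φ y s) := by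
  rw [continuous_iff_continuousAt]
  intro y
  have h : ContinuousAt ((fun p : Ed × ℝ => ballAvg d φ p.1 p.2) ∘ (fun y : Ed => (y, s))) y :=
    ContinuousAt.comp (f := fun y : Ed => (y, s)) (x := y) (contAt_ballAvg hd hφc hb y hs)
      ((continuous_id.prodMk continuous_const).continuousAt)
  exact h

/-- Continuity in `s` of the double average. -/
lemma contAt_doubleAvg (hd : 1 ≤ d) {φ : Ed → ℝ} (hφc : Continuous φ)
    (hb : ∀ y, |φ y| ≤ 1) {F : ℝ → ℝ} (hFc : Continuous F) {M : ℝ}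
    (hFM : ∀ t, |F t| ≤ M) (x : Ed) {s₀ : ℝ} (hs₀ : 0 < s₀) :
    ContinuousAt (fun s : ℝ => ballAvg d (fun y => F (ballAvg d φ y s)) x s) s₀ := by
  have hM0 : 0 ≤ M := le_trans (abs_nonneg _) (hFM 0)
  have hout : (fun s : ℝ => ballAvg d (fun y => F (ballAvg d φ y s)) x s) =
      fun s => (volume (ball (0:Ed) s)).toReal⁻¹ *
        ∫ z in ball x s, F (ballAvg d φ z s) := by
    funext s; rw [ballAvg]
  rw [hout]
  apply ContinuousAt.mul (contAt_volinv hd hs₀)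
  have hrw2 : (fun s : ℝ => ∫ z in ball x s, F (ballAvg d φ z s)) =
      fun s => ∫ z, (ball x s).indicator (fun z => F (ballAvg d φ z s)) z :=
    funext fun s => (integral_indicator measurableSet_ball).symm
  rw [hrw2]
  apply continuousAt_of_dominated (bound := (ball x (s₀ + 2)).indicator fun _ => M)
  · filter_upwards [isOpen_Ioi.mem_nhds hs₀] with s hs
    exact ((hFc.comp (cont_ballAvg_fixed hd hφc hb hs)).aestronglyMeasurable).indicator
      measurableSet_ball
  · apply Filter.eventually_of_mem (Metric.ball_mem_nhds s₀ one_pos)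
    intro s hsmem
    rw [mem_ball, Real.dist_eq] at hsmem
    apply Filter.Eventually.of_forall
    intro z
    by_cases hz : z ∈ ball x s
    · have hz2 : z ∈ ball x (s₀ + 2) := by
        rw [mem_ball] at hz ⊢
        cases' abs_lt.mp hsmem with hl hr
        linarith
      rw [Set.indicator_of_mem hz, Set.indicator_of_mem hz2]
      simpa using hFM _
    · rw [Set.indicator_of_notMem hz]
      simp only [norm_zero]
      by_cases hz2 : z ∈ ball x (s₀ + 2)
      · rw [Set.indicator_of_mem hz2]; exact hM0
      · rw [Set.indicator_of_notMem hz2]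
  · exact (integrable_indicator_iff measurableSet_ball).2
      (integrableOn_const measure_ball_lt_top.ne)
  · filter_upwards [ae_not_sphere hd x s₀] with z hz
    by_cases hlt : dist z x < s₀
    · have hcontF : ContinuousAt (fun s : ℝ => F (ballAvg d φ z s)) s₀ := by
        apply (hFc.continuousAt).comp
        have h : ContinuousAt ((fun p : Ed × ℝ => ballAvg d φ p.1 p.2) ∘ (fun s : ℝ => (z, s))) s₀ :=
          ContinuousAt.comp (f := fun s : ℝ => (z, s)) (x := s₀) (contAt_ballAvg hd hφc hb z hs₀)
            ((continuous_const.prodMk continuous_id).continuousAt)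
        exact h
      apply ContinuousAt.congr hcontF
      filter_upwards [isOpen_Ioi.mem_nhds (show dist z x < s₀ from hlt)] with s hs
      rw [Set.indicator_of_mem (by rwa [mem_ball])]
    · have hgt : s₀ < dist z x := lt_of_le_of_ne (not_lt.mp hlt) (Ne.symm hz)
      apply ContinuousAt.congr (continuousAt_const (y := (0:ℝ)))
      filter_upwards [isOpen_Iio.mem_nhds (show s₀ ∈ Set.Iio (dist z x) from hgt)] with s hs
      rw [Set.indicator_of_notMem (by simp only [mem_ball]; exact not_lt.mpr (le_of_lt hs))]

end Aux2

section Aux3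
variable {d : ℕ}
local notation "Ed" => EuclideanSpace ℝ (Fin d)

/-- The crude bound on the inner double average. -/
lemma inner_crude (hd : 1 ≤ d) {φ : Ed → ℝ} {F : ℝ → ℝ} {M : ℝ}
    (hM0 : ∀ y, |F y| ≤ M) (x : Ed) {s : ℝ} (hs : 0 < s) :
    |ballAvg d (fun y => F (ballAvg d φ y s)) x s - F (φ x)| ≤ 2 * M := by
  have h1 : |ballAvg d (fun y => F (ballAvg d φ y s)) x s| ≤ M :=
    abs_ballAvg_le hd (fun y => hM0 _) x hs
  have h2 : |F (φ x)| ≤ M := hM0 _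
  calc |ballAvg d (fun y => F (ballAvg d φ y s)) x s - F (φ x)| ≤
        |ballAvg d (fun y => F (ballAvg d φ y s)) x s| + |F (φ x)| := abs_sub _ _
    _ ≤ 2 * M := by linarith

/-- The quadratic bound on the inner double average. -/
lemma inner_est (hd : 1 ≤ d) {φ : Ed → ℝ} (hφ : ContDiff ℝ 2 φ) (hφ01 : ∀ y, |φ y| ≤ 1)
    {F : ℝ → ℝ} (hF : ContDiff ℝ 2 F) {M : ℝ} (hM0 : ∀ y, |F y| ≤ M)
    (hM1 : ∀ y, |deriv F y| ≤ M) (hM2 : ∀ y, |deriv (deriv F) y| ≤ M)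
    {L1 L2 : ℝ} (hL1nn : 0 ≤ L1) (hL2nn : 0 ≤ L2)
    (hL1 : ∀ y, ‖fderiv ℝ φ y‖ ≤ L1)
    (hL2 : ∀ y z, ‖fderiv ℝ φ y - fderiv ℝ φ z‖ ≤ L2 * ‖y - z‖)
    (x : Ed) {s : ℝ} (hs : 0 < s) :
    |ballAvg d (fun y => F (ballAvg d φ y s)) x s - F (φ x)| ≤
      (M * L2 + (M * L1 ^ 2 + M * L2)) * s ^ 2 := by
  have hφd : Differentiable ℝ φ := hφ.differentiable (by norm_num)
  have hFd : Differentiable ℝ F := hF.differentiable (by norm_num)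
  have hφc : Continuous φ := hφ.continuous
  have hFc : Continuous F := hF.continuous
  have hMnn : 0 ≤ M := le_trans (abs_nonneg _) (hM0 0)
  set g : Ed → ℝ := fun y => F (ballAvg d φ y s) with hg
  -- (a) pointwise estimate on |⟨φ⟩(y,s) − φ y|
  have ha : ∀ y : Ed, |ballAvg d φ y s - φ y| ≤ L2 * s ^ 2 := fun y =>
    ballAvg_sub_le hd hφd hφc hφ01 hL2nn hL2 y hs
  -- (c) pointwise estimate on |g − F∘φ|
  have hc : ∀ y : Ed, |g y - F (φ y)| ≤ M * (L2 * s ^ 2) := by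
    intro y
    calc |g y - F (φ y)| ≤ M * |ballAvg d φ y s - φ y| := lip_of_deriv_bound hFd hM1 _ _
      _ ≤ M * (L2 * s ^ 2) := mul_le_mul_of_nonneg_left (ha y) hMnn
  -- (b) estimate on the average of F ∘ φ
  have hcompLip : ∀ y z : Ed, ‖fderiv ℝ (fun w => F (φ w)) y -
      fderiv ℝ (fun w => F (φ w)) z‖ ≤ (M * L1 ^ 2 + M * L2) * ‖y - z‖ :=
    comp_fderiv_lip hφ hF hM1 hM2 hL1 hL2
  have hb : |ballAvg d (fun y => F (φ y)) x s - F (φ x)| ≤ (M * L1 ^ 2 + M * L2) * s ^ 2 :=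
    ballAvg_sub_le hd (hFd.comp hφd) (hFc.comp hφc) (fun y => hM0 _)
      (by positivity) hcompLip x hs
  -- decomposition
  have hgc : Continuous g := hFc.comp (cont_ballAvg_fixed hd hφc hφ01 hs)
  have hgint : IntegrableOn g (ball x s) volume :=
    integrableOn_ball_of_bounded hgc (fun y => hM0 _) x s
  have hFφint : IntegrableOn (fun y => F (φ y)) (ball x s) volume :=
    integrableOn_ball_of_bounded (hFc.comp hφc) (fun y => hM0 _) x s
  have hsub : ballAvg d (fun y => g y - F (φ y)) x s =
      ballAvg d g x s - ballAvg d (fun y => F (φ y)) x s := by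
    unfold ballAvg
    rw [integral_sub hgint hFφint]
    ring
  have hd1 : |ballAvg d (fun y => g y - F (φ y)) x s| ≤ M * (L2 * s ^ 2) :=
    abs_ballAvg_le hd hc x hs
  have hkey : ballAvg d g x s - F (φ x) =
      ballAvg d (fun y => g y - F (φ y)) x s +
        (ballAvg d (fun y => F (φ y)) x s - F (φ x)) := by
    rw [hsub]; ring
  calc |ballAvg d g x s - F (φ x)| =
      |ballAvg d (fun y => g y - F (φ y)) x s +
        (ballAvg d (fun y => F (φ y)) x s - F (φ x))| := by rw [hkey]
    _ ≤ |ballAvg d (fun y => g y - F (φ y)) x s| +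
        |ballAvg d (fun y => F (φ y)) x s - F (φ x)| := abs_add_le _ _
    _ ≤ M * (L2 * s ^ 2) + (M * L1 ^ 2 + M * L2) * s ^ 2 := add_le_add hd1 hb
    _ = (M * L2 + (M * L1 ^ 2 + M * L2)) * s ^ 2 := by ring

end Aux3


set_option maxHeartbeats 1600000 in
theorem Fdelta_approx (d : ℕ) (hd : 1 ≤ d) (α : ℝ)
    (hα : α ∈ Set.Ioo (0 : ℝ) (min 2 (d : ℝ))) (M : ℝ) :
    ∃ C > (0 : ℝ), ∀ F : ℝ → ℝ, ContDiff ℝ 2 F →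
      (∀ y, |F y| ≤ M) → (∀ y, |deriv F y| ≤ M) → (∀ y, |deriv (deriv F) y| ≤ M) →
      ∀ δ ∈ Set.Ioc (0 : ℝ) 1,
      ∀ φ : EuclideanSpace ℝ (Fin d) → ℝ, ContDiff ℝ 2 φ →
      (∀ x, φ x ∈ Set.Icc (0 : ℝ) 1) →
      (∀ k : ℕ, 1 ≤ k → k ≤ 2 → ∀ idx : Fin k → Fin d,
        BddAbove (Set.range fun x => |pderiv' d k φ idx x|)) →
      ∀ x : EuclideanSpace ℝ (Fin d),
        |Fdelta d α δ F φ x - F (φ x)| ≤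
          C * δ ^ α * (1 +
            (⨆ idx : Fin 1 → Fin d, ⨆ y, |pderiv' d 1 φ idx y|) ^ 2 +
            ⨆ idx : Fin 2 → Fin d, ⨆ y, |pderiv' d 2 φ idx y|) := by
  obtain ⟨hα0, hα2'⟩ := hα
  have hα2 : α < 2 := lt_of_lt_of_le hα2' (min_le_left _ _)
  have h2α : 0 < 2 - α := by linarith
  refine ⟨2 * |M| * (d:ℝ)^2 * (α / (2 - α)) + 2 * |M| + 1, by positivity, ?_⟩
  intro F hF hM0 hM1 hM2 δ hδ φ hφ hφIcc hbdd x
  obtain ⟨hδ0, hδ1⟩ := hδ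
  have hMnn : 0 ≤ M := le_trans (abs_nonneg _) (hM0 0)
  have hMabs : |M| = M := abs_of_nonneg hMnn
  rw [hMabs]
  have hφ01 : ∀ y, |φ y| ≤ 1 := fun y =>
    abs_le.2 ⟨by linarith [(hφIcc y).1], (hφIcc y).2⟩
  have hφc : Continuous φ := hφ.continuous
  have hFc : Continuous F := hF.continuous
  have hφd : Differentiable ℝ φ := hφ.differentiable (by norm_num)
  have hFd : Differentiable ℝ F := hF.differentiable (by norm_num)
  have i0 : Fin d := ⟨0, hd⟩
  set S1 := ⨆ idx : Fin 1 → Fin d, ⨆ y, |pderiv' d 1 φ idx y| with hS1def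
  set S2 := ⨆ idx : Fin 2 → Fin d, ⨆ y, |pderiv' d 2 φ idx y| with hS2def
  have hS1le : ∀ (idx : Fin 1 → Fin d) (y : EuclideanSpace ℝ (Fin d)),
      |pderiv' d 1 φ idx y| ≤ S1 := by
    intro idx y
    have h1 : |pderiv' d 1 φ idx y| ≤ ⨆ y, |pderiv' d 1 φ idx y| :=
      le_ciSup (hbdd 1 le_rfl (by norm_num) idx) y
    exact h1.trans (le_ciSup (f := fun idx : Fin 1 → Fin d => ⨆ y, |pderiv' d 1 φ idx y|)
      (Set.Finite.bddAbove (Set.finite_range _)) idx)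
  have hS2le : ∀ (idx : Fin 2 → Fin d) (y : EuclideanSpace ℝ (Fin d)),
      |pderiv' d 2 φ idx y| ≤ S2 := by
    intro idx y
    have h1 : |pderiv' d 2 φ idx y| ≤ ⨆ y, |pderiv' d 2 φ idx y| :=
      le_ciSup (hbdd 2 (by norm_num) le_rfl idx) y
    exact h1.trans (le_ciSup (f := fun idx : Fin 2 → Fin d => ⨆ y, |pderiv' d 2 φ idx y|)
      (Set.Finite.bddAbove (Set.finite_range _)) idx)
  have hS1nn : 0 ≤ S1 := le_trans (abs_nonneg _) (hS1le (fun _ => i0) 0)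
  have hS2nn : 0 ≤ S2 := le_trans (abs_nonneg _) (hS2le (fun _ => i0) 0)
  have hp1 : ∀ (i : Fin d) (y : EuclideanSpace ℝ (Fin d)),
      fderiv ℝ φ y (EuclideanSpace.single i 1) = pderiv' d 1 φ (fun _ => i) y := by
    intro i y
    rw [pderiv', iteratedFDeriv_one_apply]
  have hp2 : ∀ (i j : Fin d) (y : EuclideanSpace ℝ (Fin d)),
      fderiv ℝ (fderiv ℝ φ) y (EuclideanSpace.single i 1) (EuclideanSpace.single j 1) =
        pderiv' d 2 φ ![i, j] y := by
    intro i j y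
    rw [pderiv', iteratedFDeriv_two_apply]
    simp
  have hfd1 : ∀ y, ‖fderiv ℝ φ y‖ ≤ (d:ℝ) * S1 := by
    intro y
    apply opnorm_le_of_single _ hS1nn
    intro i
    rw [Real.norm_eq_abs, hp1]
    exact hS1le _ y
  have hfd2 : ∀ y, ‖fderiv ℝ (fderiv ℝ φ) y‖ ≤ (d:ℝ) * ((d:ℝ) * S2) := by
    intro y
    apply opnorm_le_of_single _ (mul_nonneg (Nat.cast_nonneg d) hS2nn)
    intro i
    apply opnorm_le_of_single _ hS2nn
    intro j
    rw [Real.norm_eq_abs, hp2]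
    exact hS2le _ y
  set L1 : ℝ := (d:ℝ) * S1 with hL1def
  set L2 : ℝ := (d:ℝ) * ((d:ℝ) * S2) with hL2def
  have hL1nn : 0 ≤ L1 := mul_nonneg (Nat.cast_nonneg d) hS1nn
  have hL2nn : 0 ≤ L2 := mul_nonneg (Nat.cast_nonneg d)
    (mul_nonneg (Nat.cast_nonneg d) hS2nn)
  have hLip : ∀ y z, ‖fderiv ℝ φ y - fderiv ℝ φ z‖ ≤ L2 * ‖y - z‖ :=
    fderivphi_lip hφ hfd2
  set CK : ℝ := M * L2 + (M * L1 ^ 2 + M * L2) with hCKdef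
  have hCKnn : 0 ≤ CK := by positivity
  set inn : ℝ → ℝ :=
    fun r => ballAvg d (fun y => F (ballAvg d φ y (δ * r))) x (δ * r) with hinn
  set pw : ℝ → ℝ := fun r => r ^ (-(1 + α)) with hpw
  -- pointwise estimates
  have hptq : ∀ r : ℝ, 0 < r → |inn r - F (φ x)| ≤ CK * (δ * r) ^ 2 := by
    intro r hr
    exact inner_est hd hφ hφ01 hF hM0 hM1 hM2 hL1nn hL2nn hfd1 hLip x (mul_pos hδ0 hr)
  have hptc : ∀ r : ℝ, 0 < r → |inn r - F (φ x)| ≤ 2 * M := by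
    intro r hr
    exact inner_crude hd hM0 x (mul_pos hδ0 hr)
  have hinnb : ∀ r : ℝ, 0 < r → |inn r| ≤ M := by
    intro r hr
    exact abs_ballAvg_le hd (fun y => hM0 _) x (mul_pos hδ0 hr)
  -- integrability
  have ha' : (-(1 + α)) < -1 := by linarith
  have hpowInt : IntegrableOn pw (Set.Ioi 1) volume := integrableOn_Ioi_rpow_of_lt ha' one_pos
  have hcont : ∀ r ∈ Set.Ioi (0:ℝ), ContinuousAt inn r := by
    intro r hr
    have h1 : ContinuousAt (fun s : ℝ => ballAvg d (fun y => F (ballAvg d φ y s)) x s)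
        (δ * r) := contAt_doubleAvg hd hφc hφ01 hFc hM0 x (mul_pos hδ0 hr)
    have h2 : ContinuousAt ((fun s : ℝ => ballAvg d (fun y => F (ballAvg d φ y s)) x s) ∘
        (fun r : ℝ => δ * r)) r :=
      ContinuousAt.comp (f := fun r : ℝ => δ * r) h1
        ((continuous_const.mul continuous_id).continuousAt)
    exact h2
  have hmeasinn : AEStronglyMeasurable (fun r => inn r * pw r)
      (volume.restrict (Set.Ioi (1:ℝ))) := by
    apply ContinuousOn.aestronglyMeasurable _ measurableSet_Ioi
    intro r hr
    have hr0 : (0:ℝ) < r := lt_trans one_pos hr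
    apply ContinuousWithinAt.mul
    · exact (hcont r hr0).continuousWithinAt
    · exact (Real.continuousAt_rpow_const r _ (Or.inl hr0.ne')).continuousWithinAt
  have hpwnn : ∀ r : ℝ, 0 < r → 0 ≤ pw r := fun r hr => Real.rpow_nonneg hr.le _
  have hI1 : IntegrableOn (fun r => inn r * pw r) (Set.Ioi 1) volume := by
    apply Integrable.mono' (hpowInt.const_mul M) hmeasinn
    filter_upwards [ae_restrict_mem measurableSet_Ioi] with r hr
    have hr0 : (0:ℝ) < r := lt_trans one_pos hr
    rw [Real.norm_eq_abs, abs_mul, abs_of_nonneg (hpwnn r hr0)]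
    exact mul_le_mul_of_nonneg_right (hinnb r hr0) (hpwnn r hr0)
  have hIc : IntegrableOn (fun r => F (φ x) * pw r) (Set.Ioi 1) volume :=
    hpowInt.const_mul _
  have hId : IntegrableOn (fun r => (inn r - F (φ x)) * pw r) (Set.Ioi 1) volume := by
    have h := hI1.sub hIc
    exact h.congr (Filter.Eventually.of_forall fun r => (sub_mul _ _ _).symm)
  -- the exact integral of pw
  have hval : ∫ r in Set.Ioi (1:ℝ), pw r = α⁻¹ := by
    rw [hpw]
    rw [integral_Ioi_rpow_of_lt ha' one_pos, Real.one_rpow]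
    rw [show -(1 + α) + 1 = -α by ring, neg_div_neg_eq, one_div]
  have hFdelta : Fdelta d α δ F φ x - F (φ x) =
      α * ∫ r in Set.Ioi (1:ℝ), (inn r - F (φ x)) * pw r := by
    have h2 : ∫ r in Set.Ioi (1:ℝ), (inn r - F (φ x)) * pw r =
        (∫ r in Set.Ioi (1:ℝ), inn r * pw r) - F (φ x) * α⁻¹ := by
      have h3 : (fun r => (inn r - F (φ x)) * pw r) =
          fun r => inn r * pw r - F (φ x) * pw r := by
        funext r; ring
      rw [h3, integral_sub hI1 hIc, MeasureTheory.integral_const_mul, hval]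
    rw [h2, Fdelta]
    have : (∫ r in Set.Ioi (1:ℝ),
        ballAvg d (fun y => F (ballAvg d φ y (δ * r))) x (δ * r) * r ^ (-(1 + α))) =
        ∫ r in Set.Ioi (1:ℝ), inn r * pw r := rfl
    rw [this]
    field_simp
    -- split the integral at b = δ⁻¹
  set b : ℝ := δ⁻¹ with hbdef
  have hb0 : 0 < b := inv_pos.2 hδ0
  have hb1 : 1 ≤ b := by
    have := inv_anti₀ hδ0 hδ1
    simpa using this
  have hIocsub : Set.Ioc 1 b ⊆ Set.Ioi 1 := fun r hr => hr.1
  have hIoisub : Set.Ioi b ⊆ Set.Ioi (1:ℝ) := Set.Ioi_subset_Ioi hb1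
  have hIdIoc := hId.mono_set hIocsub
  have hIdIoi := hId.mono_set hIoisub
  have hsplit : ∫ r in Set.Ioi 1, (inn r - F (φ x)) * pw r =
      (∫ r in Set.Ioc 1 b, (inn r - F (φ x)) * pw r) +
        ∫ r in Set.Ioi b, (inn r - F (φ x)) * pw r := by
    rw [← setIntegral_union Set.Ioc_disjoint_Ioi_same measurableSet_Ioi hIdIoc hIdIoi,
      Set.Ioc_union_Ioi_eq_Ioi hb1]
  -- power computation
  have hpweq : ∀ r : ℝ, 0 < r → (δ * r) ^ 2 * pw r = δ ^ 2 * r ^ (1 - α) := by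
    intro r hr0
    have h2 : r ^ (2:ℕ) * r ^ (-(1+α)) = r ^ (1-α) := by
      rw [← Real.rpow_natCast r 2, ← Real.rpow_add hr0]
      congr 1
      push_cast
      ring
    calc (δ * r) ^ 2 * pw r = δ ^ 2 * (r ^ (2:ℕ) * r ^ (-(1+α))) := by rw [hpw]; ring
      _ = δ ^ 2 * r ^ (1-α) := by rw [h2]
  -- first piece
  have hmaj1int : IntegrableOn (fun r : ℝ => r ^ (1 - α)) (Set.Ioc 1 b) volume := by
    have := intervalIntegral.intervalIntegrable_rpow'
      (a := 1) (b := b) (show (-1:ℝ) < 1 - α by linarith)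
    rwa [intervalIntegrable_iff, Set.uIoc_of_le hb1] at this
  have habs1 : |∫ r in Set.Ioc 1 b, (inn r - F (φ x)) * pw r| ≤
      CK * δ ^ 2 * ∫ r in Set.Ioc 1 b, r ^ (1 - α) := by
    rw [← Real.norm_eq_abs]
    calc ‖∫ r in Set.Ioc 1 b, (inn r - F (φ x)) * pw r‖ ≤
        ∫ r in Set.Ioc 1 b, ‖(inn r - F (φ x)) * pw r‖ := norm_integral_le_integral_norm _
      _ ≤ ∫ r in Set.Ioc 1 b, CK * δ ^ 2 * r ^ (1 - α) := by
          apply setIntegral_mono_on hIdIoc.norm (hmaj1int.const_mul _) measurableSet_Ioc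
          intro r hr
          have hr0 : (0:ℝ) < r := lt_trans one_pos hr.1
          rw [Real.norm_eq_abs, abs_mul, abs_of_nonneg (hpwnn r hr0)]
          have h1 : |inn r - F (φ x)| * pw r ≤ (CK * (δ * r) ^ 2) * pw r :=
            mul_le_mul_of_nonneg_right (hptq r hr0) (hpwnn r hr0)
          refine h1.trans (le_of_eq ?_)
          calc CK * (δ * r) ^ 2 * pw r = CK * ((δ * r) ^ 2 * pw r) := by ring
            _ = CK * (δ ^ 2 * r ^ (1-α)) := by rw [hpweq r hr0]
            _ = CK * δ ^ 2 * r ^ (1-α) := by ring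
      _ = CK * δ ^ 2 * ∫ r in Set.Ioc 1 b, r ^ (1 - α) :=
          MeasureTheory.integral_const_mul _ _
  have h0bint : IntegrableOn (fun r : ℝ => r ^ (1 - α)) (Set.Ioc 0 b) volume := by
    have := intervalIntegral.intervalIntegrable_rpow'
      (a := 0) (b := b) (show (-1:ℝ) < 1 - α by linarith)
    rwa [intervalIntegrable_iff, Set.uIoc_of_le hb0.le] at this
  have hval1 : ∫ r in Set.Ioc 1 b, r ^ (1-α) ≤ b ^ (2-α) / (2-α) := by
    have hmono : ∫ r in Set.Ioc 1 b, r ^ (1-α) ≤ ∫ r in Set.Ioc 0 b, r ^ (1-α) := by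
      apply setIntegral_mono_set h0bint
      · filter_upwards [ae_restrict_mem measurableSet_Ioc] with r hr
        exact Real.rpow_nonneg hr.1.le _
      · exact HasSubset.Subset.eventuallyLE (Set.Ioc_subset_Ioc_left zero_le_one)
    apply hmono.trans
    rw [← intervalIntegral.integral_of_le hb0.le,
      integral_rpow (Or.inl (show (-1:ℝ) < 1 - α by linarith))]
    rw [Real.zero_rpow (show (1:ℝ) - α + 1 ≠ 0 by intro h; apply ne_of_gt h2α; linarith)]
    have he : (1:ℝ) - α + 1 = 2 - α := by ring
    rw [he]
    simp
  -- second piece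
  have hmaj2int : IntegrableOn pw (Set.Ioi b) volume := integrableOn_Ioi_rpow_of_lt ha' hb0
  have habs2 : |∫ r in Set.Ioi b, (inn r - F (φ x)) * pw r| ≤
      2 * M * ∫ r in Set.Ioi b, pw r := by
    rw [← Real.norm_eq_abs]
    calc ‖∫ r in Set.Ioi b, (inn r - F (φ x)) * pw r‖ ≤
        ∫ r in Set.Ioi b, ‖(inn r - F (φ x)) * pw r‖ := norm_integral_le_integral_norm _
      _ ≤ ∫ r in Set.Ioi b, 2 * M * pw r := by
          apply setIntegral_mono_on hIdIoi.norm (hmaj2int.const_mul _) measurableSet_Ioi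
          intro r hr
          have hr0 : (0:ℝ) < r := lt_of_lt_of_le hb0 (le_of_lt hr)
          rw [Real.norm_eq_abs, abs_mul, abs_of_nonneg (hpwnn r hr0)]
          exact mul_le_mul_of_nonneg_right (hptc r hr0) (hpwnn r hr0)
      _ = 2 * M * ∫ r in Set.Ioi b, pw r := MeasureTheory.integral_const_mul _ _
  have hval2 : ∫ r in Set.Ioi b, pw r = b ^ (-α) / α := by
    rw [hpw, integral_Ioi_rpow_of_lt ha' hb0]
    have he : -(1+α) + 1 = -α := by ring
    rw [he, neg_div_neg_eq]
  -- δ-power identities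
  have hbpow1 : δ ^ 2 * b ^ (2-α) = δ ^ α := by
    rw [hbdef, Real.inv_rpow hδ0.le, ← Real.rpow_neg hδ0.le,
      ← Real.rpow_natCast δ 2, ← Real.rpow_add hδ0]
    congr 1
    push_cast
    ring
  have hbpow2 : b ^ (-α) = δ ^ α := by
    rw [hbdef, Real.inv_rpow hδ0.le, ← Real.rpow_neg hδ0.le, neg_neg]
  have hδα : 0 < δ ^ α := Real.rpow_pos_of_pos hδ0 α
  have hSnn : (0:ℝ) ≤ S1 ^ 2 + S2 := by positivity
  have hCKle : CK ≤ 2 * M * (d:ℝ) ^ 2 * (1 + S1 ^ 2 + S2) := by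
    rw [hCKdef, hL1def, hL2def]
    have hd2 : (0:ℝ) ≤ (d:ℝ) ^ 2 := by positivity
    nlinarith [mul_nonneg hMnn hd2, mul_nonneg (mul_nonneg hMnn hd2) (sq_nonneg S1),
      mul_nonneg (mul_nonneg hMnn hd2) hS2nn]
  -- final chain
  have hmain : |Fdelta d α δ F φ x - F (φ x)| ≤ α * CK / (2-α) * δ ^ α + 2 * M * δ ^ α := by
    rw [hFdelta, abs_mul, abs_of_nonneg hα0.le]
    have hstep1 : |∫ r in Set.Ioi 1, (inn r - F (φ x)) * pw r| ≤
        CK * δ ^ 2 * (b ^ (2-α) / (2-α)) + 2 * M * (b ^ (-α) / α) := by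
      rw [hsplit]
      calc |(∫ r in Set.Ioc 1 b, (inn r - F (φ x)) * pw r) +
            ∫ r in Set.Ioi b, (inn r - F (φ x)) * pw r| ≤
          |∫ r in Set.Ioc 1 b, (inn r - F (φ x)) * pw r| +
            |∫ r in Set.Ioi b, (inn r - F (φ x)) * pw r| := abs_add_le _ _
        _ ≤ CK * δ ^ 2 * (b ^ (2-α) / (2-α)) + 2 * M * (b ^ (-α) / α) := by
            apply add_le_add
            · apply habs1.trans
              apply mul_le_mul_of_nonneg_left _ (by positivity)
              calc ∫ r in Set.Ioc 1 b, r ^ (1-α) ≤ b ^ (2-α) / (2-α) := hval1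
                _ = b ^ (2-α) / (2-α) := rfl
            · rw [← hval2]
              exact habs2
    calc α * |∫ r in Set.Ioi 1, (inn r - F (φ x)) * pw r| ≤
        α * (CK * δ ^ 2 * (b ^ (2-α) / (2-α)) + 2 * M * (b ^ (-α) / α)) :=
          mul_le_mul_of_nonneg_left hstep1 hα0.le
      _ = α * CK / (2-α) * (δ ^ 2 * b ^ (2-α)) + 2 * M * b ^ (-α) * (α / α) := by
          field_simp
      _ = α * CK / (2-α) * δ ^ α + 2 * M * δ ^ α := by
          rw [hbpow1, hbpow2, div_self hα0.ne']
          ring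
  apply hmain.trans
  have h1 : α * CK / (2-α) * δ ^ α ≤
      (2 * M * (d:ℝ) ^ 2 * (α / (2-α))) * δ ^ α * (1 + S1 ^ 2 + S2) := by
    have h2 := mul_le_mul_of_nonneg_left hCKle (le_of_lt (div_pos hα0 h2α))
    have h3 : α * CK / (2-α) ≤ 2 * M * (d:ℝ) ^ 2 * (α / (2-α)) * (1 + S1 ^ 2 + S2) := by
      calc α * CK / (2-α) = (α / (2-α)) * CK := by ring
        _ ≤ (α / (2-α)) * (2 * M * (d:ℝ) ^ 2 * (1 + S1 ^ 2 + S2)) := h2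
        _ = 2 * M * (d:ℝ) ^ 2 * (α / (2-α)) * (1 + S1 ^ 2 + S2) := by ring
    calc α * CK / (2-α) * δ ^ α ≤
        (2 * M * (d:ℝ) ^ 2 * (α / (2-α)) * (1 + S1 ^ 2 + S2)) * δ ^ α :=
          mul_le_mul_of_nonneg_right h3 hδα.le
      _ = (2 * M * (d:ℝ) ^ 2 * (α / (2-α))) * δ ^ α * (1 + S1 ^ 2 + S2) := by ring
  have h2 : 2 * M * δ ^ α ≤ (2 * M) * δ ^ α * (1 + S1 ^ 2 + S2) := by
    nlinarith [mul_nonneg (mul_nonneg (show (0:ℝ) ≤ 2 * M by linarith) hδα.le) hSnn]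
  have h3 : (0:ℝ) ≤ δ ^ α * (1 + S1 ^ 2 + S2) := by
    apply mul_nonneg hδα.le
    nlinarith
  have h4 : (2 * M * (d:ℝ) ^ 2 * (α / (2-α)) + 2 * M + 1) * δ ^ α * (1 + S1 ^ 2 + S2) =
      (2 * M * (d:ℝ) ^ 2 * (α / (2-α))) * δ ^ α * (1 + S1 ^ 2 + S2) +
        (2 * M) * δ ^ α * (1 + S1 ^ 2 + S2) + δ ^ α * (1 + S1 ^ 2 + S2) := by ring
  linarith [h1, h2, h3, h4]
end

section
/- Let d ≥ 1, r > 0 and γ ∈ (0,1]. Let φ : ℝ^d → ℝ be bounded and measurable and let g : ℝ^d → ℝ be measurable with γ ≤ g(x) ≤ 1 for all x. Then for every x ∈ ℝ^d, 2 φ(x) 𝓛_r φ(x) − 2 φ(x) ⟨⟨φ·g⟩⟩(x,r) ≤ 𝓛_r(φ²)(x) − 2 (γ − r²/(d+2)) φ(x)². -/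
open MeasureTheory Metric

/-- The double ball average `⟨⟨φ⟩⟩(x,r)`. -/
noncomputable def dblAvg (d : ℕ) (φ : EuclideanSpace ℝ (Fin d) → ℝ)
    (x : EuclideanSpace ℝ (Fin d)) (r : ℝ) : ℝ :=
  ballAvg d (fun y => ballAvg d φ y r) x r

/-- The operator `𝓛_r φ(x) = ((d+2)/(2r²)) (⟨⟨φ⟩⟩(x,r) − φ(x))`. -/
noncomputable def opL (d : ℕ) (r : ℝ) (φ : EuclideanSpace ℝ (Fin d) → ℝ)
    (x : EuclideanSpace ℝ (Fin d)) : ℝ :=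
  ((d : ℝ) + 2) / (2 * r ^ 2) * (dblAvg d φ x r - φ x)

namespace SquareDissipativityAux

variable {d : ℕ} {r : ℝ}

lemma key (c a b h γ : ℝ) (hc : 0 < c) (hγ0 : 0 < γ) (hγ1 : γ ≤ 1) (hγh : γ ≤ h)
    (hh1 : h ≤ 1) :
    0 ≤ c^2*(b-a)^2 + a^2 + 2*c*(a*(b*h)) - 2*γ*c*a^2 := by
  rcases le_or_gt 0 (a*b) with hab | hab
  · have h1 : 0 ≤ (a*b)*(h-γ) := mul_nonneg hab (sub_nonneg.2 hγh)
    nlinarith [mul_nonneg hγ0.le (sq_nonneg (c*(a-b)-a)),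
      mul_nonneg (sub_nonneg.2 hγ1) (sq_nonneg (c*(a-b)-a)),
      mul_nonneg (sub_nonneg.2 hγ1) (sq_nonneg a),
      mul_nonneg (sub_nonneg.2 hγ1) (sq_nonneg (c*(a-b))), mul_nonneg hc.le h1]
  · have h1 : 0 ≤ (a*b)*(h-1) := by nlinarith
    nlinarith [sq_nonneg (c*(b-a)+a),
      mul_nonneg (mul_nonneg hc.le (sq_nonneg a)) (sub_nonneg.2 hγ1),
      mul_nonneg hc.le h1]

lemma vol_eq (y : EuclideanSpace ℝ (Fin d)) :
    volume (ball y r) = volume (ball (0 : EuclideanSpace ℝ (Fin d)) r) :=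
  Measure.addHaar_ball_center volume y r

lemma vol_pos (hr : 0 < r) :
    0 < (volume (ball (0 : EuclideanSpace ℝ (Fin d)) r)).toReal :=
  ENNReal.toReal_pos (measure_ball_pos volume _ hr).ne' measure_ball_lt_top.ne

lemma meas_ballAvg (f : EuclideanSpace ℝ (Fin d) → ℝ) (hf : Measurable f) :
    Measurable (fun y => ballAvg d f y r) := by
  unfold ballAvg
  apply Measurable.const_mul
  have h1 : ∀ y : EuclideanSpace ℝ (Fin d),
      ∫ z in ball y r, f z = ∫ z, ({p : (EuclideanSpace ℝ (Fin d)) × (EuclideanSpace ℝ (Fin d)) | p.2 ∈ ball p.1 r}).indicator (fun p => f p.2) (y, z) := by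
    intro y
    rw [← integral_indicator measurableSet_ball]
    congr 1 with z
  simp_rw [h1]
  have hS : MeasurableSet {p : (EuclideanSpace ℝ (Fin d)) × (EuclideanSpace ℝ (Fin d)) | p.2 ∈ ball p.1 r} := by
    have : IsOpen {p : (EuclideanSpace ℝ (Fin d)) × (EuclideanSpace ℝ (Fin d)) | dist p.2 p.1 < r} :=
      isOpen_lt (continuous_dist.comp (continuous_snd.prodMk continuous_fst)) continuous_const
    exact this.measurableSet
  have hF : StronglyMeasurable (({p : (EuclideanSpace ℝ (Fin d)) × (EuclideanSpace ℝ (Fin d)) | p.2 ∈ ball p.1 r}).indicator (fun p => f p.2)) :=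
    ((hf.comp measurable_snd).indicator hS).stronglyMeasurable
  exact hF.integral_prod_right'.measurable

lemma intg_on (f : EuclideanSpace ℝ (Fin d) → ℝ) (hf : Measurable f)
    {M : ℝ} (hM : ∀ z, |f z| ≤ M) (y : EuclideanSpace ℝ (Fin d)) :
    IntegrableOn f (ball y r) volume := by
  have hc : IntegrableOn (fun _ : EuclideanSpace ℝ (Fin d) => M) (ball y r) volume :=
    integrableOn_const measure_ball_lt_top.ne
  exact Integrable.mono' hc hf.aestronglyMeasurable.restrict (ae_of_all _ fun z => hM z)

lemma abs_ballAvg_le (hr : 0 < r) (f : EuclideanSpace ℝ (Fin d) → ℝ)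
    (hf : Measurable f) {M : ℝ} (hM : ∀ z, |f z| ≤ M) (y : EuclideanSpace ℝ (Fin d)) :
    |ballAvg d f y r| ≤ M := by
  have hV := vol_pos (d := d) hr
  have h1 : ‖∫ z in ball y r, f z‖ ≤ M * (volume (ball y r)).toReal := by
    apply norm_setIntegral_le_of_norm_le_const measure_ball_lt_top (fun z _ => hM z)
  rw [vol_eq] at h1
  unfold ballAvg
  rw [abs_mul, abs_inv, abs_of_pos hV]
  rw [Real.norm_eq_abs] at h1
  rw [inv_mul_le_iff₀ hV]
  linarith [h1, mul_comm M (volume (ball (0 : EuclideanSpace ℝ (Fin d)) r)).toReal]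

lemma ballAvg_nonneg (f : EuclideanSpace ℝ (Fin d) → ℝ) (hf : ∀ z, 0 ≤ f z)
    (y : EuclideanSpace ℝ (Fin d)) : 0 ≤ ballAvg d f y r :=
  mul_nonneg (inv_nonneg.2 ENNReal.toReal_nonneg)
    (setIntegral_nonneg measurableSet_ball fun z _ => hf z)

lemma ballAvg_comb (hr : 0 < r) (f₁ f₂ f₃ : EuclideanSpace ℝ (Fin d) → ℝ)
    (p q s t : ℝ) (y : EuclideanSpace ℝ (Fin d))
    (h₁ : IntegrableOn f₁ (ball y r) volume)
    (h₂ : IntegrableOn f₂ (ball y r) volume)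
    (h₃ : IntegrableOn f₃ (ball y r) volume) :
    ballAvg d (fun z => p * f₁ z + q * f₂ z + s * f₃ z + t) y r =
      p * ballAvg d f₁ y r + q * ballAvg d f₂ y r + s * ballAvg d f₃ y r + t := by
  have hV := vol_pos (d := d) hr
  have hA : IntegrableOn (fun z => p * f₁ z + q * f₂ z) (ball y r) volume :=
    (h₁.const_mul p).add (h₂.const_mul q)
  have hB : IntegrableOn (fun z => p * f₁ z + q * f₂ z + s * f₃ z) (ball y r) volume :=
    hA.add (h₃.const_mul s)
  have hT : IntegrableOn (fun _ : EuclideanSpace ℝ (Fin d) => t) (ball y r) volume :=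
    integrableOn_const measure_ball_lt_top.ne
  unfold ballAvg
  rw [integral_add hB hT, integral_add hA (h₃.const_mul s),
    integral_add (h₁.const_mul p) (h₂.const_mul q),
    integral_const_mul, integral_const_mul, integral_const_mul, setIntegral_const,
    vol_eq, smul_eq_mul]
  field_simp
  rw [measureReal_def, vol_eq]

lemma dblAvg_nonneg (f : EuclideanSpace ℝ (Fin d) → ℝ) (hf : ∀ z, 0 ≤ f z)
    (x : EuclideanSpace ℝ (Fin d)) : 0 ≤ dblAvg d f x r :=
  ballAvg_nonneg _ (fun y => ballAvg_nonneg f hf y) x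

lemma dblAvg_comb (hr : 0 < r) (f₁ f₂ f₃ : EuclideanSpace ℝ (Fin d) → ℝ)
    (hm₁ : Measurable f₁) (hm₂ : Measurable f₂) (hm₃ : Measurable f₃)
    {M₁ M₂ M₃ : ℝ} (hb₁ : ∀ z, |f₁ z| ≤ M₁) (hb₂ : ∀ z, |f₂ z| ≤ M₂)
    (hb₃ : ∀ z, |f₃ z| ≤ M₃)
    (p q s t : ℝ) (x : EuclideanSpace ℝ (Fin d)) :
    dblAvg d (fun z => p * f₁ z + q * f₂ z + s * f₃ z + t) x r =
      p * dblAvg d f₁ x r + q * dblAvg d f₂ x r + s * dblAvg d f₃ x r + t := by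
  unfold dblAvg
  have hinner : (fun y => ballAvg d (fun z => p * f₁ z + q * f₂ z + s * f₃ z + t) y r) =
      fun y => p * ballAvg d f₁ y r + q * ballAvg d f₂ y r + s * ballAvg d f₃ y r + t :=
    funext fun y => ballAvg_comb hr f₁ f₂ f₃ p q s t y
      (intg_on f₁ hm₁ hb₁ y) (intg_on f₂ hm₂ hb₂ y) (intg_on f₃ hm₃ hb₃ y)
  rw [hinner]
  exact ballAvg_comb hr _ _ _ p q s t x
    (intg_on _ (meas_ballAvg f₁ hm₁) (fun y => abs_ballAvg_le hr f₁ hm₁ hb₁ y) x)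
    (intg_on _ (meas_ballAvg f₂ hm₂) (fun y => abs_ballAvg_le hr f₂ hm₂ hb₂ y) x)
    (intg_on _ (meas_ballAvg f₃ hm₃) (fun y => abs_ballAvg_le hr f₃ hm₃ hb₃ y) x)

end SquareDissipativityAux

open SquareDissipativityAux in
theorem square_dissipativity (d : ℕ) (hd : 1 ≤ d) (r : ℝ) (hr : 0 < r)
    (γ : ℝ) (hγ : γ ∈ Set.Ioc (0 : ℝ) 1)
    (φ : EuclideanSpace ℝ (Fin d) → ℝ) (hφm : Measurable φ)
    (hφb : ∃ M : ℝ, ∀ x, |φ x| ≤ M)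
    (g : EuclideanSpace ℝ (Fin d) → ℝ) (hgm : Measurable g)
    (hg : ∀ x, γ ≤ g x ∧ g x ≤ 1)
    (x : EuclideanSpace ℝ (Fin d)) :
    2 * φ x * opL d r φ x - 2 * φ x * dblAvg d (fun y => φ y * g y) x r ≤
      opL d r (fun y => φ y ^ 2) x - 2 * (γ - r ^ 2 / ((d : ℝ) + 2)) * φ x ^ 2 := by
  obtain ⟨hγ0, hγ1⟩ := hγ
  obtain ⟨M, hM⟩ := hφb
  have hc : (0:ℝ) < ((d : ℝ) + 2) / (2 * r ^ 2) := by positivity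
  set c : ℝ := ((d : ℝ) + 2) / (2 * r ^ 2) with hcdef
  set a : ℝ := φ x with hadef
  -- boundedness and measurability of the three functions
  have hm₁ : Measurable (fun z => φ z ^ 2) := hφm.pow_const 2
  have hm₃ : Measurable (fun z => φ z * g z) := hφm.mul hgm
  have hb₁ : ∀ z, |φ z ^ 2| ≤ M ^ 2 := by
    intro z
    rw [abs_pow]
    exact pow_le_pow_left₀ (abs_nonneg _) (hM z) 2
  have hb₃ : ∀ z, |φ z * g z| ≤ M := by
    intro z
    rw [abs_mul]
    have hg1 : |g z| ≤ 1 := abs_le.2 ⟨by linarith [(hg z).1], (hg z).2⟩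
    calc |φ z| * |g z| ≤ M * 1 :=
          mul_le_mul (hM z) hg1 (abs_nonneg _) ((abs_nonneg (φ z)).trans (hM z))
      _ = M := mul_one M
  set t : ℝ := c * a ^ 2 + a ^ 2 / c - 2 * γ * a ^ 2 with htdef
  -- pointwise nonnegativity
  have hpt : ∀ z, 0 ≤ c * (φ z ^ 2) + (-(2 * c * a)) * φ z + (2 * a) * (φ z * g z) + t := by
    intro z
    have hk := key c a (φ z) (g z) γ hc hγ0 hγ1 (hg z).1 (hg z).2
    have h2 : c * (φ z ^ 2) + (-(2 * c * a)) * φ z + (2 * a) * (φ z * g z) + t =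
        (c^2*(φ z - a)^2 + a^2 + 2*c*(a*(φ z * g z)) - 2*γ*c*a^2) / c := by
      rw [htdef]
      field_simp
      ring
    rw [h2]
    exact div_nonneg hk hc.le
  -- double-average the pointwise inequality
  have H0 : 0 ≤ dblAvg d (fun z => c * (φ z ^ 2) + (-(2 * c * a)) * φ z +
      (2 * a) * (φ z * g z) + t) x r := dblAvg_nonneg _ hpt x
  have Hcomb := dblAvg_comb hr (fun z => φ z ^ 2) φ (fun z => φ z * g z)
    hm₁ hφm hm₃ hb₁ hM hb₃ c (-(2 * c * a)) (2 * a) t x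
  rw [Hcomb] at H0
  -- reduce to algebra
  have hdne : ((d : ℝ) + 2) ≠ 0 := by positivity
  have hrne : r ≠ 0 := ne_of_gt hr
  have hdiv : a ^ 2 / c = 2 * (r ^ 2 / ((d : ℝ) + 2)) * a ^ 2 := by
    rw [hcdef]
    field_simp
  rw [htdef, hdiv] at H0
  simp only [opL]
  rw [← hcdef, ← hadef, ← sub_nonneg]
  have hident : c * (dblAvg d (fun y => φ y ^ 2) x r - a ^ 2) -
        2 * (γ - r ^ 2 / ((d : ℝ) + 2)) * a ^ 2 -
        (2 * a * (c * (dblAvg d φ x r - a)) -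
          2 * a * dblAvg d (fun y => φ y * g y) x r) =
      c * dblAvg d (fun y => φ y ^ 2) x r + (-(2 * c * a)) * dblAvg d φ x r +
        2 * a * dblAvg d (fun y => φ y * g y) x r +
        (c * a ^ 2 + 2 * (r ^ 2 / ((d : ℝ) + 2)) * a ^ 2 - 2 * γ * a ^ 2) := by
    ring
  rw [hident]
  exact H0
end

section
/- Let d ≥ 1. There exist constants c > 0 and r₀ > 0, depending only on d, such that for every r ∈ (0, r₀), every γ ∈ (0,1], every bounded measurable φ : ℝ^d → ℝ, every measurable g : ℝ^d → ℝ with γ ≤ g(x) ≤ 1 for all x, and every x ∈ ℝ^d, 4 φ(x)³ 𝓛_r φ(x) − 4 φ(x)³ ⟨⟨φ·g⟩⟩(x,r) ≤ 𝓛_r(φ⁴)(x) − 4 (γ − c·r²) φ(x)⁴. -/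
open MeasureTheory Metric

namespace FourthAux

variable {d : ℕ}

local notation "E" => EuclideanSpace ℝ (Fin d)

lemma vol_pos {r : ℝ} (hr : 0 < r) :
    0 < (volume (ball (0 : E) r)).toReal :=
  ENNReal.toReal_pos (measure_ball_pos volume 0 hr).ne' measure_ball_lt_top.ne

lemma vol_ball_eq (y : E) (r : ℝ) :
    volume (ball y r) = volume (ball (0 : E) r) :=
  Measure.addHaar_ball_center volume y r

lemma integrableOn_ball {f : E → ℝ} (hf : Measurable f) {C : ℝ}
    (hb : ∀ z, |f z| ≤ C) (y : E) (r : ℝ) : IntegrableOn f (ball y r) volume := by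
  have hc : IntegrableOn (fun _ : E => C) (ball y r) volume :=
    integrableOn_const measure_ball_lt_top.ne
  exact Integrable.mono' hc hf.aestronglyMeasurable.restrict
    (ae_of_all _ fun z => by simpa using hb z)

lemma abs_ballAvg_le {f : E → ℝ} (hf : Measurable f) {C : ℝ}
    (hb : ∀ z, |f z| ≤ C) {r : ℝ} (hr : 0 < r) (y : E) :
    |ballAvg d f y r| ≤ C := by
  have hV := vol_pos (d := d) hr
  have h1 : ‖∫ z in ball y r, f z‖ ≤ C * (volume (ball y r)).toReal :=
    norm_setIntegral_le_of_norm_le_const_ae' measure_ball_lt_top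
      (ae_of_all _ fun z _ => by simpa using hb z)
  rw [vol_ball_eq] at h1
  rw [ballAvg, abs_mul, abs_inv, abs_of_nonneg ENNReal.toReal_nonneg]
  rw [Real.norm_eq_abs] at h1
  calc (volume (ball (0 : E) r)).toReal⁻¹ * |∫ z in ball y r, f z|
      ≤ (volume (ball (0 : E) r)).toReal⁻¹ *
        (C * (volume (ball (0 : E) r)).toReal) := by
        exact mul_le_mul_of_nonneg_left h1 (by positivity)
    _ = C := by field_simp

lemma measurable_ballAvg {f : E → ℝ} (hf : Measurable f) (r : ℝ) :
    Measurable (fun y => ballAvg d f y r) := by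
  unfold ballAvg
  apply Measurable.const_mul
  have key : (fun y : E => ∫ z in ball y r, f z) =
      fun y : E => ∫ z, ({p : E × E | dist p.2 p.1 < r}.indicator
        (fun p => f p.2)) (y, z) := by
    funext y
    rw [← integral_indicator measurableSet_ball]
    refine integral_congr_ae (Filter.Eventually.of_forall fun z => ?_)
    by_cases h : dist z y < r
    · simp [Set.indicator, h, mem_ball]
    · simp [Set.indicator, h, mem_ball]
  rw [key]
  have hset : MeasurableSet {p : E × E | dist p.2 p.1 < r} :=
    (isOpen_lt (continuous_snd.dist continuous_fst) continuous_const).measurableSet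
  exact (((hf.comp measurable_snd).indicator hset).stronglyMeasurable.integral_prod_right').measurable

lemma ballAvg_const (c : ℝ) {r : ℝ} (hr : 0 < r) (y : E) :
    ballAvg d (fun _ => c) y r = c := by
  have hV := vol_pos (d := d) hr
  have hv : (volume (ball y r)).toReal = (volume (ball (0 : E) r)).toReal := by
    rw [vol_ball_eq]
  rw [ballAvg, setIntegral_const, smul_eq_mul, measureReal_def, hv]
  field_simp

lemma ballAvg_comb {f₁ f₂ f₃ : E → ℝ} (hf₁ : Measurable f₁) (hf₂ : Measurable f₂)
    (hf₃ : Measurable f₃) {C₁ C₂ C₃ : ℝ} (hb₁ : ∀ z, |f₁ z| ≤ C₁) (hb₂ : ∀ z, |f₂ z| ≤ C₂)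
    (hb₃ : ∀ z, |f₃ z| ≤ C₃) (α β δ c : ℝ) {r : ℝ} (hr : 0 < r) (y : E) :
    ballAvg d (fun z => α * f₁ z + β * f₂ z + δ * f₃ z + c) y r =
      α * ballAvg d f₁ y r + β * ballAvg d f₂ y r + δ * ballAvg d f₃ y r + c := by
  have i₁ := (integrableOn_ball hf₁ hb₁ y r).const_mul α
  have i₂ := (integrableOn_ball hf₂ hb₂ y r).const_mul β
  have i₃ := (integrableOn_ball hf₃ hb₃ y r).const_mul δ
  have ic : IntegrableOn (fun _ : E => c) (ball y r) volume :=
    integrableOn_const measure_ball_lt_top.ne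
  have i₁₂ : IntegrableOn (fun z => α * f₁ z + β * f₂ z) (ball y r) volume := i₁.add i₂
  have i₁₂₃ : IntegrableOn (fun z => α * f₁ z + β * f₂ z + δ * f₃ z) (ball y r) volume :=
    i₁₂.add i₃
  have e1 : ∫ z in ball y r, (α * f₁ z + β * f₂ z + δ * f₃ z + c) =
      (∫ z in ball y r, (α * f₁ z + β * f₂ z + δ * f₃ z)) + ∫ _z in ball y r, (c : ℝ) :=
    integral_add i₁₂₃ ic
  have e2 : ∫ z in ball y r, (α * f₁ z + β * f₂ z + δ * f₃ z) =
      (∫ z in ball y r, (α * f₁ z + β * f₂ z)) + ∫ z in ball y r, δ * f₃ z :=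
    integral_add i₁₂ i₃
  have e3 : ∫ z in ball y r, (α * f₁ z + β * f₂ z) =
      (∫ z in ball y r, α * f₁ z) + ∫ z in ball y r, β * f₂ z :=
    integral_add i₁ i₂
  have : ∫ z in ball y r, (α * f₁ z + β * f₂ z + δ * f₃ z + c) =
      α * (∫ z in ball y r, f₁ z) + β * (∫ z in ball y r, f₂ z) +
        δ * (∫ z in ball y r, f₃ z) + ∫ _z in ball y r, (c : ℝ) := by
    rw [e1, e2, e3, integral_const_mul, integral_const_mul, integral_const_mul]
  have hc := ballAvg_const (d := d) c hr y
  rw [ballAvg, this]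
  rw [ballAvg] at hc ⊢
  rw [ballAvg, ballAvg]
  rw [mul_add, mul_add, mul_add, hc]
  ring

lemma dblAvg_comb {f₁ f₂ f₃ : E → ℝ} (hf₁ : Measurable f₁) (hf₂ : Measurable f₂)
    (hf₃ : Measurable f₃) {C₁ C₂ C₃ : ℝ} (hb₁ : ∀ z, |f₁ z| ≤ C₁) (hb₂ : ∀ z, |f₂ z| ≤ C₂)
    (hb₃ : ∀ z, |f₃ z| ≤ C₃) (α β δ c : ℝ) {r : ℝ} (hr : 0 < r) (x : E) :
    dblAvg d (fun z => α * f₁ z + β * f₂ z + δ * f₃ z + c) x r =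
      α * dblAvg d f₁ x r + β * dblAvg d f₂ x r + δ * dblAvg d f₃ x r + c := by
  have h1 : (fun y => ballAvg d (fun z => α * f₁ z + β * f₂ z + δ * f₃ z + c) y r) =
      fun y => α * ballAvg d f₁ y r + β * ballAvg d f₂ y r + δ * ballAvg d f₃ y r + c := by
    funext y; exact ballAvg_comb hf₁ hf₂ hf₃ hb₁ hb₂ hb₃ α β δ c hr y
  rw [dblAvg, h1]
  exact ballAvg_comb (measurable_ballAvg hf₁ r) (measurable_ballAvg hf₂ r)
    (measurable_ballAvg hf₃ r) (abs_ballAvg_le hf₁ hb₁ hr) (abs_ballAvg_le hf₂ hb₂ hr)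
    (abs_ballAvg_le hf₃ hb₃ hr) α β δ c hr x

lemma dblAvg_nonneg {f : E → ℝ} (hf : ∀ z, 0 ≤ f z) (x : E) (r : ℝ) :
    0 ≤ dblAvg d f x r := by
  have h1 : ∀ y : E, 0 ≤ ballAvg d f y r := fun y =>
    mul_nonneg (by positivity) (setIntegral_nonneg measurableSet_ball fun z _ => hf z)
  exact mul_nonneg (by positivity) (setIntegral_nonneg measurableSet_ball fun y _ => h1 y)

end FourthAux

theorem fourth_power_dissipativity (d : ℕ) (hd : 1 ≤ d) :
    ∃ c > (0 : ℝ), ∃ r₀ > (0 : ℝ), ∀ r ∈ Set.Ioo (0 : ℝ) r₀, ∀ γ ∈ Set.Ioc (0 : ℝ) 1,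
      ∀ φ : EuclideanSpace ℝ (Fin d) → ℝ, Measurable φ → (∃ M : ℝ, ∀ x, |φ x| ≤ M) →
      ∀ g : EuclideanSpace ℝ (Fin d) → ℝ, Measurable g → (∀ x, γ ≤ g x ∧ g x ≤ 1) →
      ∀ x : EuclideanSpace ℝ (Fin d),
        4 * φ x ^ 3 * opL d r φ x - 4 * φ x ^ 3 * dblAvg d (fun y => φ y * g y) x r ≤
          opL d r (fun y => φ y ^ 4) x - 4 * (γ - c * r ^ 2) * φ x ^ 4 := by
  refine ⟨1 / ((d : ℝ) + 2), by positivity, 1, one_pos, ?_⟩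
  rintro r ⟨hr0, hr1⟩ γ ⟨hγ0, hγ1⟩ φ hφ ⟨M, hM⟩ g hg hgb x
  set a : ℝ := φ x with ha
  set K : ℝ := ((d : ℝ) + 2) / (2 * r ^ 2) with hK
  have hKpos : 0 < K := by positivity
  -- the combined function
  set H : EuclideanSpace ℝ (Fin d) → ℝ := fun z =>
    K * (φ z ^ 4) + (-(4 * K * a ^ 3)) * φ z + (4 * a ^ 3) * (φ z * g z) +
      (3 * K * a ^ 4 - 4 * γ * a ^ 4 + 4 * (1 / ((d : ℝ) + 2)) * r ^ 2 * a ^ 4) with hH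
  -- pointwise nonnegativity
  have hHpos : ∀ z, 0 ≤ H z := by
    intro z
    have hs1 : γ ≤ g z := (hgb z).1
    have hs2 : g z ≤ 1 := (hgb z).2
    have hs0 : 0 < g z := lt_of_lt_of_le hγ0 hs1
    have hKr : K * (4 * (1 / ((d : ℝ) + 2)) * r ^ 2) = 2 := by
      rw [hK]; field_simp; ring
    have key : 0 ≤ K * H z := by
      have e1 : K * H z = K ^ 2 * (φ z ^ 4) - 4 * K ^ 2 * a ^ 3 * φ z +
          4 * K * a ^ 3 * (φ z * g z) + 3 * K ^ 2 * a ^ 4 - 4 * K * γ * a ^ 4 +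
          2 * a ^ 4 := by
        rw [hH]
        have : K * (3 * K * a ^ 4 - 4 * γ * a ^ 4 +
            4 * (1 / ((d : ℝ) + 2)) * r ^ 2 * a ^ 4) =
            3 * K ^ 2 * a ^ 4 - 4 * K * γ * a ^ 4 +
              (K * (4 * (1 / ((d : ℝ) + 2)) * r ^ 2)) * a ^ 4 := by ring
        rw [mul_add, this, hKr]
        ring
      rw [e1]
      nlinarith [sq_nonneg (K * a * (φ z - a) + a ^ 2 * g z),
        sq_nonneg (K * (φ z - a) * (φ z + a)),
        mul_nonneg (mul_nonneg hKpos.le (by positivity : (0:ℝ) ≤ a ^ 4))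
          (sub_nonneg.2 hs1),
        mul_nonneg (by positivity : (0:ℝ) ≤ a ^ 4)
          (by nlinarith : (0:ℝ) ≤ 1 - g z ^ 2)]
    nlinarith [key, hKpos]
  have havg : 0 ≤ dblAvg d H x r := FourthAux.dblAvg_nonneg hHpos x r
  -- linearity
  have hφ4 : Measurable fun z => φ z ^ 4 := hφ.pow_const 4
  have hφg : Measurable fun z => φ z * g z := hφ.mul hg
  have hb4 : ∀ z, |φ z ^ 4| ≤ M ^ 4 := by
    intro z
    calc |φ z ^ 4| = |φ z| ^ 4 := by rw [abs_pow]
      _ ≤ M ^ 4 := pow_le_pow_left₀ (abs_nonneg _) (hM z) 4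
  have hbg : ∀ z, |φ z * g z| ≤ M * 1 := by
    intro z
    rw [abs_mul]
    have h1 : |g z| ≤ 1 := by
      rw [abs_le]
      exact ⟨le_trans (by linarith) (hgb z).1, (hgb z).2⟩
    exact mul_le_mul (hM z) h1 (abs_nonneg _) (le_trans (abs_nonneg _) (hM z))
  have hlin := FourthAux.dblAvg_comb (d := d) hφ4 hφ hφg hb4 hM hbg
    K (-(4 * K * a ^ 3)) (4 * a ^ 3)
    (3 * K * a ^ 4 - 4 * γ * a ^ 4 + 4 * (1 / ((d : ℝ) + 2)) * r ^ 2 * a ^ 4) hr0 x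
  have hHd : dblAvg d H x r =
      K * dblAvg d (fun z => φ z ^ 4) x r +
        (-(4 * K * a ^ 3)) * dblAvg d φ x r +
        (4 * a ^ 3) * dblAvg d (fun z => φ z * g z) x r +
        (3 * K * a ^ 4 - 4 * γ * a ^ 4 + 4 * (1 / ((d : ℝ) + 2)) * r ^ 2 * a ^ 4) := by
    rw [hH]; exact hlin
  rw [hHd] at havg
  rw [opL, opL]
  have : ((d : ℝ) + 2) / (2 * r ^ 2) = K := rfl
  rw [this]
  nlinarith [havg]
end

section
/- Let d ≥ 1 and α > 0. There exists a constant C_{d,α} > 0, depending only on d and α, such that for all z₁, z₂ ∈ ℝ^d with z₁ ≠ z₂, ∫_{|z₁−z₂|/2}^∞ V_r(z₁,z₂) · r^{−(d+α+1)} dr = C_{d,α} · |z₁ − z₂|^{−α}. -/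
open MeasureTheory Metric
open scoped Pointwise

theorem intersection_volume_kernel (d : ℕ) (hd : 1 ≤ d) (α : ℝ) (hα : 0 < α) :
    ∃ C > (0 : ℝ), ∀ z₁ z₂ : EuclideanSpace ℝ (Fin d), z₁ ≠ z₂ →
      ∫ r in Set.Ioi (‖z₁ - z₂‖ / 2),
          (volume (ball z₁ r ∩ ball z₂ r)).toReal * r ^ (-((d : ℝ) + α + 1)) =
        C * ‖z₁ - z₂‖ ^ (-α) := by
  classical
  set p : ℝ := (d : ℝ) + α + 1 with hp
  set e : EuclideanSpace ℝ (Fin d) := EuclideanSpace.single (⟨0, hd⟩ : Fin d) (1 : ℝ) with he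
  have hnorme : ‖e‖ = 1 := by
    rw [he, EuclideanSpace.norm_single]; norm_num
  haveI : Nontrivial (EuclideanSpace ℝ (Fin d)) := by
    refine nontrivial_of_ne e 0 fun h => ?_
    rw [h, norm_zero] at hnorme; norm_num at hnorme
  set F : ℝ → ℝ :=
    fun t => (volume (ball e t ∩ ball (0 : EuclideanSpace ℝ (Fin d)) t)).toReal with hF
  set g : ℝ → ℝ := fun t => F t * t ^ (-p) with hg
  have hfin : ∀ t : ℝ, volume (ball e t ∩ ball (0 : EuclideanSpace ℝ (Fin d)) t) ≠ ⊤ :=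
    fun t => ((measure_mono Set.inter_subset_left).trans_lt measure_ball_lt_top).ne
  have hFmono : Monotone F := by
    intro a b hab
    exact ENNReal.toReal_mono (hfin b)
      (measure_mono (Set.inter_subset_inter (ball_subset_ball hab) (ball_subset_ball hab)))
  set κ : ℝ := (volume (ball (0 : EuclideanSpace ℝ (Fin d)) 1)).toReal with hκ
  have hκ0 : 0 ≤ κ := ENNReal.toReal_nonneg
  have hbound : ∀ t ∈ Set.Ioi (1/2 : ℝ), ‖g t‖ ≤ κ * t ^ (-(α + 1)) := by
    intro t ht
    have ht' : (1/2 : ℝ) < t := ht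
    have ht0 : 0 < t := by linarith
    have h1 : F t ≤ t ^ (d : ℝ) * κ := by
      have : volume (ball e t ∩ ball (0 : EuclideanSpace ℝ (Fin d)) t)
          ≤ volume (ball (0 : EuclideanSpace ℝ (Fin d)) t) :=
        measure_mono Set.inter_subset_right
      have h2 := Measure.addHaar_ball (volume : Measure (EuclideanSpace ℝ (Fin d)))
        (0 : EuclideanSpace ℝ (Fin d)) ht0.le
      rw [finrank_euclideanSpace_fin] at h2
      calc F t ≤ (volume (ball (0 : EuclideanSpace ℝ (Fin d)) t)).toReal :=
            ENNReal.toReal_mono measure_ball_lt_top.ne this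
        _ = t ^ (d : ℝ) * κ := by
            rw [h2, ENNReal.toReal_mul, ENNReal.toReal_ofReal (by positivity), hκ,
              Real.rpow_natCast]
    have hrp : (0 : ℝ) < t ^ (-p) := Real.rpow_pos_of_pos ht0 _
    have : g t ≤ (t ^ (d : ℝ) * κ) * t ^ (-p) :=
      mul_le_mul_of_nonneg_right h1 hrp.le
    have key : (t ^ (d : ℝ) * κ) * t ^ (-p) = κ * t ^ (-(α + 1)) := by
      rw [mul_comm (t ^ (d : ℝ)) κ, mul_assoc, ← Real.rpow_add ht0]
      congr 2
      rw [hp]; ring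
    rw [Real.norm_eq_abs, abs_of_nonneg (by positivity)]
    calc g t ≤ (t ^ (d : ℝ) * κ) * t ^ (-p) := this
      _ = κ * t ^ (-(α + 1)) := key
  have hmeas : AEStronglyMeasurable g (volume.restrict (Set.Ioi (1/2 : ℝ))) := by
    refine AEStronglyMeasurable.mul (hFmono.measurable.aestronglyMeasurable) ?_
    refine ContinuousOn.aestronglyMeasurable ?_ measurableSet_Ioi
    refine ContinuousOn.rpow_const continuousOn_id fun t ht => Or.inl ?_
    have : (1/2 : ℝ) < t := ht
    exact ne_of_gt (by linarith)
  have hint : IntegrableOn g (Set.Ioi (1/2 : ℝ)) := by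
    refine Integrable.mono'
      ((integrableOn_Ioi_rpow_of_lt (by linarith : -(α+1) < -1) (by norm_num : (0:ℝ) < 1/2)).const_mul κ)
      hmeas ?_
    filter_upwards [ae_restrict_mem measurableSet_Ioi] with t ht
    exact hbound t ht
  have hgpos : ∀ t ∈ Set.Ioi (1/2 : ℝ), 0 < g t := by
    intro t ht
    have ht' : (1/2 : ℝ) < t := ht
    have ht0 : 0 < t := by linarith
    have hsub : ball ((1/2 : ℝ) • e) (t - 1/2)
        ⊆ ball e t ∩ ball (0 : EuclideanSpace ℝ (Fin d)) t := by
      intro x hx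
      rw [mem_ball_iff_norm] at hx
      have hc1 : ‖(1/2 : ℝ) • e - e‖ = 1/2 := by
        have : (1/2 : ℝ) • e - e = (-(1/2) : ℝ) • e := by
          module
        rw [this, norm_smul, hnorme, Real.norm_eq_abs]; norm_num
      have hc0 : ‖(1/2 : ℝ) • e‖ = 1/2 := by
        rw [norm_smul, hnorme, Real.norm_eq_abs]; norm_num
      constructor
      · rw [mem_ball_iff_norm]
        calc ‖x - e‖ = ‖(x - (1/2 : ℝ) • e) + ((1/2 : ℝ) • e - e)‖ := by rw [sub_add_sub_cancel]
          _ ≤ ‖x - (1/2 : ℝ) • e‖ + ‖(1/2 : ℝ) • e - e‖ := norm_add_le _ _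
          _ < (t - 1/2) + 1/2 := by rw [hc1]; linarith
          _ = t := by ring
      · rw [mem_ball_iff_norm, sub_zero]
        calc ‖x‖ = ‖(x - (1/2 : ℝ) • e) + (1/2 : ℝ) • e‖ := by rw [sub_add_cancel]
          _ ≤ ‖x - (1/2 : ℝ) • e‖ + ‖(1/2 : ℝ) • e‖ := norm_add_le _ _
          _ < (t - 1/2) + 1/2 := by rw [hc0]; linarith
          _ = t := by ring
    have hvpos : 0 < volume (ball e t ∩ ball (0 : EuclideanSpace ℝ (Fin d)) t) :=
      lt_of_lt_of_le (measure_ball_pos _ _ (by linarith : (0:ℝ) < t - 1/2)) (measure_mono hsub)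
    have hFt : 0 < F t := ENNReal.toReal_pos hvpos.ne' (hfin t)
    exact mul_pos hFt (Real.rpow_pos_of_pos ht0 _)
  set C : ℝ := ∫ t in Set.Ioi (1/2 : ℝ), g t with hC
  have hCpos : 0 < C := by
    have hnn : 0 ≤ᵐ[volume.restrict (Set.Ioi (1/2 : ℝ))] g := by
      filter_upwards [ae_restrict_mem measurableSet_Ioi] with t ht
      exact (hgpos t ht).le
    rw [hC, setIntegral_pos_iff_support_of_nonneg_ae hnn hint]
    have hsupp : Set.Ioi (1/2 : ℝ) ⊆ Function.support g ∩ Set.Ioi (1/2 : ℝ) :=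
      fun t ht => ⟨ne_of_gt (hgpos t ht), ht⟩
    refine lt_of_lt_of_le ?_ (measure_mono hsupp)
    rw [Real.volume_Ioi]; exact ENNReal.zero_lt_top
  refine ⟨C, hCpos, fun z₁ z₂ hz => ?_⟩
  set s : ℝ := ‖z₁ - z₂‖ with hs
  have hs0 : 0 < s := by
    rw [hs, norm_pos_iff]; exact sub_ne_zero.mpr hz
  -- Step A: pointwise volume identity
  have volEq : ∀ r : ℝ,
      (volume (ball z₁ r ∩ ball z₂ r)).toReal = s ^ (d : ℕ) * F (r / s) := by
    intro r
    -- translation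
    have A1 : volume (ball z₁ r ∩ ball z₂ r)
        = volume (ball (z₁ - z₂) r ∩ ball (0 : EuclideanSpace ℝ (Fin d)) r) := by
      have := measure_preimage_add (volume : Measure (EuclideanSpace ℝ (Fin d))) z₂
        (ball z₁ r ∩ ball z₂ r)
      rw [← this]
      congr 1
      ext x
      simp only [Set.mem_preimage, Set.mem_inter_iff, mem_ball_iff_norm]
      have e1 : z₂ + x - z₁ = x - (z₁ - z₂) := by abel
      have e2 : z₂ + x - z₂ = x - 0 := by abel
      rw [e1, e2]
    -- rotation
    have hnormse : ‖s • e‖ = ‖z₁ - z₂‖ := by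
      rw [norm_smul, hnorme, Real.norm_eq_abs, abs_of_pos hs0, mul_one]
    have A2 : volume (ball (z₁ - z₂) r ∩ ball (0 : EuclideanSpace ℝ (Fin d)) r)
        = volume (ball (s • e) r ∩ ball (0 : EuclideanSpace ℝ (Fin d)) r) := by
      set L := Submodule.reflection (ℝ ∙ ((z₁ - z₂) - s • e))ᗮ with hL
      have hLv : L (z₁ - z₂) = s • e := Submodule.reflection_sub hnormse.symm
      have hpre : L ⁻¹' (ball (s • e) r ∩ ball (0 : EuclideanSpace ℝ (Fin d)) r)
          = ball (z₁ - z₂) r ∩ ball (0 : EuclideanSpace ℝ (Fin d)) r := by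
        ext x
        simp only [Set.mem_preimage, Set.mem_inter_iff, mem_ball_iff_norm]
        rw [← hLv, ← map_sub, L.norm_map, sub_zero, sub_zero, L.norm_map]
      rw [← hpre]
      exact (L.measurePreserving).measure_preimage
        ((measurableSet_ball.inter measurableSet_ball).nullMeasurableSet)
    -- scaling
    have A3 : ball (s • e) r ∩ ball (0 : EuclideanSpace ℝ (Fin d)) r
        = s • (ball e (r / s) ∩ ball (0 : EuclideanSpace ℝ (Fin d)) (r / s)) := by
      rw [Set.smul_set_inter₀ hs0.ne', _root_.smul_ball hs0.ne', _root_.smul_ball hs0.ne', smul_zero]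
      have : ‖s‖ * (r / s) = r := by
        rw [Real.norm_eq_abs, abs_of_pos hs0]
        field_simp
      rw [this]
    have A4 := Measure.addHaar_smul (volume : Measure (EuclideanSpace ℝ (Fin d))) s
      (ball e (r / s) ∩ ball (0 : EuclideanSpace ℝ (Fin d)) (r / s))
    rw [finrank_euclideanSpace_fin] at A4
    rw [A1, A2, A3, A4, ENNReal.toReal_mul, ENNReal.toReal_ofReal (abs_nonneg _),
      abs_of_pos (pow_pos hs0 d)]
  -- Step B: the integral computation
  have hsinv : (0 : ℝ) < s⁻¹ := inv_pos.mpr hs0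
  have B1 : ∫ r in Set.Ioi (s / 2),
      (volume (ball z₁ r ∩ ball z₂ r)).toReal * r ^ (-p)
      = ∫ r in Set.Ioi (s / 2), s ^ (-(α + 1)) * g (s⁻¹ * r) := by
    refine setIntegral_congr_fun measurableSet_Ioi fun r hr => ?_
    have hr' : s / 2 < r := hr
    have hr0 : 0 < r := lt_trans (by positivity) hr'
    have hsr : 0 < s⁻¹ * r := by positivity
    rw [volEq r]
    have hrs : r = s * (s⁻¹ * r) := by field_simp
    have hsplit : r ^ (-p) = s ^ (-p) * (s⁻¹ * r) ^ (-p) := by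
      conv_lhs => rw [hrs]
      exact Real.mul_rpow hs0.le hsr.le
    have hdiv : r / s = s⁻¹ * r := div_eq_inv_mul r s
    rw [hdiv, hsplit, hg]
    have hsd : (s : ℝ) ^ (d : ℕ) = s ^ ((d : ℝ)) := (Real.rpow_natCast s d).symm
    rw [hsd]
    have : s ^ ((d : ℝ)) * s ^ (-p) = s ^ (-(α + 1)) := by
      rw [← Real.rpow_add hs0]
      congr 1
      rw [hp]; ring
    calc s ^ ((d : ℝ)) * F (s⁻¹ * r) * (s ^ (-p) * (s⁻¹ * r) ^ (-p))
        = (s ^ ((d : ℝ)) * s ^ (-p)) * (F (s⁻¹ * r) * (s⁻¹ * r) ^ (-p)) := by ring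
      _ = s ^ (-(α + 1)) * (F (s⁻¹ * r) * (s⁻¹ * r) ^ (-p)) := by rw [this]
  have B2 : ∫ r in Set.Ioi (s / 2), g (s⁻¹ * r)
      = s * ∫ t in Set.Ioi (1/2 : ℝ), g t := by
    have := MeasureTheory.integral_comp_mul_left_Ioi g (s / 2) hsinv
    rw [this, inv_inv]
    have : s⁻¹ * (s / 2) = 1/2 := by field_simp
    rw [this, smul_eq_mul]
  rw [B1, integral_const_mul, B2, ← hC]
  have : s ^ (-(α + 1)) * (s * C) = C * s ^ (-α) := by
    have h1 : s ^ (-(α + 1)) * s = s ^ (-α) := by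
      nth_rewrite 2 [← Real.rpow_one s]
      rw [← Real.rpow_add hs0]
      congr 1; ring
    calc s ^ (-(α + 1)) * (s * C) = (s ^ (-(α + 1)) * s) * C := by ring
      _ = s ^ (-α) * C := by rw [h1]
      _ = C * s ^ (-α) := mul_comm _ _
  rw [this]
end

section
/- Let λ > 0, M > 0 and let f : (0,∞) → [0,M] be measurable and Lebesgue integrable on (0,∞). Let (r_N) be a sequence in (0,1] with r_N → 0, let (D_N) be a sequence of positive reals with D_N → 1, and let (t_N) be a sequence of positive reals with t_N / r_N² → ∞. Then r_N^{−2} ∫_0^{t_N} e^{−2λs} f(D_N s / r_N²) ds → ∫_0^∞ f(s) ds as N → ∞. -/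
open MeasureTheory Filter
open scoped Topology

theorem drift_load_integral_high_dim (lam M : ℝ) (hlam : 0 < lam) (hM : 0 < M)
    (f : ℝ → ℝ) (hfm : Measurable f)
    (hf : ∀ t ∈ Set.Ioi (0 : ℝ), f t ∈ Set.Icc (0 : ℝ) M)
    (hfi : IntegrableOn f (Set.Ioi 0) volume)
    (r : ℕ → ℝ) (hr : ∀ N, r N ∈ Set.Ioc (0 : ℝ) 1)
    (hr0 : Tendsto r atTop (𝓝 0))
    (D : ℕ → ℝ) (hD : ∀ N, 0 < D N) (hD1 : Tendsto D atTop (𝓝 1))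
    (t : ℕ → ℝ) (ht : ∀ N, 0 < t N)
    (htr : Tendsto (fun N => t N / r N ^ 2) atTop atTop) :
    Tendsto (fun N => (r N ^ 2)⁻¹ *
        ∫ s in Set.Ioc 0 (t N), Real.exp (-2 * lam * s) * f (D N * s / r N ^ 2))
      atTop (𝓝 (∫ s in Set.Ioi (0 : ℝ), f s)) := by
  have hrpos : ∀ N, 0 < r N := fun N => (hr N).1
  have hr2 : ∀ N, (0:ℝ) < r N ^ 2 := fun N => pow_pos (hrpos N) 2
  set c : ℕ → ℝ := fun N => 2 * lam * r N ^ 2 / D N with hc_def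
  set T : ℕ → ℝ := fun N => D N * t N / r N ^ 2 with hT_def
  have hcpos : ∀ N, 0 < c N := fun N =>
    div_pos (mul_pos (mul_pos two_pos hlam) (hr2 N)) (hD N)
  have hc0 : Tendsto c atTop (𝓝 0) := by
    have h1 : Tendsto (fun N => 2 * lam * r N ^ 2) atTop (𝓝 (2 * lam * 0)) := by
      apply Tendsto.const_mul
      simpa using (hr0.pow 2)
    have := h1.div hD1 one_ne_zero
    simp only [mul_zero, zero_div] at this
    exact this
  have hTtop : Tendsto T atTop atTop := by
    have : Tendsto (fun N => D N * (t N / r N ^ 2)) atTop atTop :=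
      Tendsto.pos_mul_atTop one_pos hD1 htr
    apply this.congr
    intro N; simp only [hT_def]; rw [mul_div_assoc]
  -- change of variables
  have key : ∀ N, (r N ^ 2)⁻¹ *
      ∫ s in Set.Ioc 0 (t N), Real.exp (-2 * lam * s) * f (D N * s / r N ^ 2)
      = (D N)⁻¹ * ∫ u in Set.Ioc 0 (T N), Real.exp (-(c N) * u) * f u := by
    intro N
    have hrne : r N ^ 2 ≠ 0 := (hr2 N).ne'
    have hDne : D N ≠ 0 := (hD N).ne'
    set a : ℝ := D N / r N ^ 2 with ha_def
    have hapos : 0 < a := div_pos (hD N) (hr2 N)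
    have hint : ∀ s : ℝ, Real.exp (-2 * lam * s) * f (D N * s / r N ^ 2)
        = Real.exp (-(c N) * (a * s)) * f (a * s) := by
      intro s
      have h1 : -(c N) * (a * s) = -2 * lam * s := by
        simp only [hc_def, ha_def]
        field_simp
        ring
        rw [mul_comm (r N) s, mul_assoc, mul_inv_cancel₀ (hrpos N).ne', mul_one]
      have h2 : a * s = D N * s / r N ^ 2 := by
        simp only [ha_def, div_mul_eq_mul_div]
      rw [h1, h2]
    have hTa : T N = a * t N := by
      simp only [hT_def, ha_def]; field_simp
    calc (r N ^ 2)⁻¹ *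
        ∫ s in Set.Ioc 0 (t N), Real.exp (-2 * lam * s) * f (D N * s / r N ^ 2)
        = (r N ^ 2)⁻¹ * ∫ s in (0:ℝ)..(t N), Real.exp (-(c N) * (a * s)) * f (a * s) := by
          rw [intervalIntegral.integral_of_le (ht N).le]
          congr 1
          exact setIntegral_congr_fun measurableSet_Ioc (fun s _ => hint s)
      _ = (r N ^ 2)⁻¹ * (a⁻¹ • ∫ u in (a * 0)..(a * t N), Real.exp (-(c N) * u) * f u) := by
          rw [intervalIntegral.integral_comp_mul_left
            (fun u => Real.exp (-(c N) * u) * f u) hapos.ne']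
      _ = (D N)⁻¹ * ∫ u in Set.Ioc 0 (T N), Real.exp (-(c N) * u) * f u := by
          rw [mul_zero, intervalIntegral.integral_of_le (mul_pos hapos (ht N)).le,
            smul_eq_mul, ← mul_assoc, hTa]
          congr 1
          rw [ha_def, inv_div]
          field_simp
          exact div_self (hrpos N).ne'
  simp only [key]
  -- now the limit
  have hG : ∀ N, (∫ u in Set.Ioc 0 (T N), Real.exp (-(c N) * u) * f u)
      = ∫ u in Set.Ioi (0:ℝ),
          (Set.Iic (T N)).indicator (fun u => Real.exp (-(c N) * u) * f u) u := by
    intro N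
    rw [integral_indicator measurableSet_Iic, Measure.restrict_restrict measurableSet_Iic,
      Set.inter_comm, Set.Ioi_inter_Iic]
  have hmain : Tendsto (fun N => ∫ u in Set.Ioc 0 (T N), Real.exp (-(c N) * u) * f u)
      atTop (𝓝 (∫ s in Set.Ioi (0:ℝ), f s)) := by
    simp only [hG]
    apply tendsto_integral_filter_of_dominated_convergence f
    · apply Eventually.of_forall
      intro N
      exact (((Real.measurable_exp.comp (measurable_const.mul measurable_id)).mul
        hfm).indicator measurableSet_Iic).aestronglyMeasurable
    · apply Eventually.of_forall
      intro N
      filter_upwards [ae_restrict_mem measurableSet_Ioi] with u hu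
      by_cases h : u ∈ Set.Iic (T N)
      · rw [Set.indicator_of_mem h]
        have hfu := hf u hu
        have hexp : Real.exp (-(c N) * u) ≤ 1 := by
          rw [Real.exp_le_one_iff]
          have : (0:ℝ) ≤ c N * u := mul_nonneg (hcpos N).le (le_of_lt hu)
          linarith
        rw [Real.norm_eq_abs, abs_of_nonneg (mul_nonneg (Real.exp_pos _).le hfu.1)]
        calc Real.exp (-(c N) * u) * f u ≤ 1 * f u :=
              mul_le_mul_of_nonneg_right hexp hfu.1
          _ = f u := one_mul _
      · rw [Set.indicator_of_notMem h, norm_zero]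
        exact (hf u hu).1
    · exact hfi
    · filter_upwards [ae_restrict_mem measurableSet_Ioi] with u hu
      have hev : ∀ᶠ N in atTop, (Set.Iic (T N)).indicator
          (fun u => Real.exp (-(c N) * u) * f u) u = Real.exp (-(c N) * u) * f u := by
        filter_upwards [hTtop.eventually_ge_atTop u] with N hN
        exact Set.indicator_of_mem (Set.mem_Iic.mpr hN) _
      have hlim : Tendsto (fun N => Real.exp (-(c N) * u) * f u) atTop (𝓝 (f u)) := by
        have h1 : Tendsto (fun N => Real.exp (-(c N) * u)) atTop (𝓝 1) := by
          have : Tendsto (fun N => -(c N) * u) atTop (𝓝 0) := by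
            simpa using (hc0.neg.mul_const u)
          simpa [Function.comp_def] using (Real.continuous_exp.continuousAt.tendsto.comp this)
        simpa using h1.mul_const (f u)
      exact Tendsto.congr' (by filter_upwards [hev] with N h; exact h.symm) hlim
  have hD1inv : Tendsto (fun N => (D N)⁻¹) atTop (𝓝 1) := by
    simpa using hD1.inv₀ one_ne_zero
  simpa using hD1inv.mul hmain
end
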